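/- arXiv:2501.11295 — 9 statements merged into one kernel-verified Lean document; each statement's English description precedes it below -/
import Mathlib

section
/- Let V be a d-dimensional vector space over 𝔽₂ and let p ≥ 1. Then I_p(V) is additively generated by the elements γ_G, where G ranges over all p-dimensional linear subspaces of V; that is, I₁(V)^p equals the 𝔽₂-linear span of the set {γ_G : G a linear subspace of V with dim G = p}. -/
open Finset Pointwise

/-- The group algebra `𝔽₂[V]` of an additive group `V`. -/
abbrev GroupAlg (V : Type*) [AddCommGroup V] := AddMonoidAlgebra (ZMod 2) V

/-- The augmentation ideal `I₁(V)`: the kernel of the algebra map `𝔽₂[V] → 𝔽₂`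
sending every basis element `T_v` to `1`. -/
noncomputable def augIdeal (V : Type*) [AddCommGroup V] : Ideal (GroupAlg V) :=
  RingHom.ker (AddMonoidAlgebra.lift (ZMod 2) (ZMod 2) V 1)

/-- `γ_G = Σ_{v ∈ G} T_v` for a subset `G ⊆ V`. -/
noncomputable def gammaSet {V : Type*} [AddCommGroup V] [Fintype V] (G : Set V) :
    GroupAlg V :=
  ∑ v ∈ (Set.toFinite G).toFinset, AddMonoidAlgebra.single v (1 : ZMod 2)

namespace QuillenAux

variable {V : Type*} [AddCommGroup V]

/-- `T v = single v 1 + 1`. -/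
noncomputable def T (v : V) : GroupAlg V := AddMonoidAlgebra.single v 1 + 1

lemma eps_single (v : V) (c : ZMod 2) :
    AddMonoidAlgebra.lift (ZMod 2) (ZMod 2) V 1 (AddMonoidAlgebra.single v c) = c := by
  rw [AddMonoidAlgebra.lift_single]; simp

lemma T_mem_aug (v : V) : T v ∈ augIdeal V := by
  have h1 : (AddMonoidAlgebra.lift (ZMod 2) (ZMod 2) V 1) (1 : GroupAlg V) = 1 := by
    rw [show (1 : GroupAlg V) = AddMonoidAlgebra.single 0 1 from AddMonoidAlgebra.one_def,
      eps_single]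
  have : (AddMonoidAlgebra.lift (ZMod 2) (ZMod 2) V 1) (T v) = 0 := by
    rw [T, map_add, h1, eps_single]; decide
  simpa [augIdeal, RingHom.mem_ker] using this

lemma prod_single {ι : Type*} (s : Finset ι) (a : ι → V) :
    ∏ i ∈ s, AddMonoidAlgebra.single (a i) (1 : ZMod 2)
      = AddMonoidAlgebra.single (∑ i ∈ s, a i) (1 : ZMod 2) := by
  classical
  induction s using Finset.cons_induction with
  | empty => simp [AddMonoidAlgebra.one_def]
  | cons i s hi ih =>
      rw [Finset.prod_cons, Finset.sum_cons, ih, AddMonoidAlgebra.single_mul_single, one_mul]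

lemma add_self' {M : Type*} [AddCommMonoid M] [Module (ZMod 2) M] (x : M) : x + x = 0 := by
  rw [← two_smul (ZMod 2) x, show (2 : ZMod 2) = 0 from rfl, zero_smul]

variable [Module (ZMod 2) V]

lemma T_eq (v : V) :
    T v = ∑ c : ZMod 2, AddMonoidAlgebra.single (c • v) (1 : ZMod 2) := by
  have h : (Finset.univ : Finset (ZMod 2)) = {0, 1} := by decide
  rw [h, Finset.sum_insert (by decide), Finset.sum_singleton]
  rw [T, AddMonoidAlgebra.one_def]
  simp [add_comm]

lemma prod_T {n : ℕ} (v : Fin n → V) :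
    ∏ i, T (v i)
      = ∑ g : Fin n → ZMod 2,
          AddMonoidAlgebra.single (∑ i, g i • v i) (1 : ZMod 2) := by
  simp_rw [T_eq]
  rw [Finset.prod_univ_sum]
  rw [Fintype.piFinset_univ]
  exact Finset.sum_congr rfl fun g _ => prod_single _ _

lemma prod_T_dep {n : ℕ} {v : Fin n → V}
    (hv : ¬ LinearIndependent (ZMod 2) v) : ∏ i, T (v i) = 0 := by
  rw [prod_T]
  obtain ⟨g, hg0, i0, hi0⟩ := Fintype.not_linearIndependent_iff.mp hv
  apply Finset.sum_ninvolution (g := fun h => h + g)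
  · intro a
    have : (∑ i, (a + g) i • v i) = ∑ i, a i • v i := by
      simp only [Pi.add_apply, add_smul, Finset.sum_add_distrib, hg0, add_zero]
    rw [this]
    exact add_self' _
  · intro a _
    intro h
    apply hi0
    have := congrFun h i0
    simpa using this
  · intro a; exact Finset.mem_univ _
  · intro a
    funext i
    have : g i + g i = 0 := add_self' _
    simp [add_assoc, this]

end QuillenAux

namespace QuillenAux

variable {V : Type*} [AddCommGroup V] [Module (ZMod 2) V]

section FT
variable [Fintype V]

lemma prod_T_indep {n : ℕ} {v : Fin n → V} (hv : LinearIndependent (ZMod 2) v) :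
    ∏ i, T (v i)
      = gammaSet ((Submodule.span (ZMod 2) (Set.range v) : Submodule (ZMod 2) V) : Set V) := by
  rw [prod_T, gammaSet]
  have key : ∀ a b : ZMod 2, a + b = 0 → a = b := by decide
  refine Finset.sum_bij (fun (g : Fin n → ZMod 2) _ => ∑ i, g i • v i) ?_ ?_ ?_ ?_
  · intro g _
    rw [Set.Finite.mem_toFinset]
    exact Submodule.sum_mem _ fun i _ =>
      Submodule.smul_mem _ _ (Submodule.subset_span ⟨i, rfl⟩)
  · intro g1 _ g2 _ h
    have hinj := Fintype.linearIndependent_iff.mp hv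
    have h0 : ∑ i, (g1 + g2) i • v i = 0 := by
      simp only [Pi.add_apply, add_smul, Finset.sum_add_distrib, h]
      exact add_self' _
    funext i
    exact key _ _ (hinj (g1 + g2) h0 i)
  · intro b hb
    rw [Set.Finite.mem_toFinset] at hb
    obtain ⟨c, hc⟩ := (Submodule.mem_span_range_iff_exists_fun (ZMod 2)).mp hb
    exact ⟨c, Finset.mem_univ _, hc⟩
  · intro g _; rfl

lemma exists_indep (G : Submodule (ZMod 2) V) {p : ℕ}
    (hG : Module.finrank (ZMod 2) G = p) :
    ∃ v : Fin p → V, LinearIndependent (ZMod 2) v ∧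
      Submodule.span (ZMod 2) (Set.range v) = G := by
  have : Module.Finite (ZMod 2) G := Module.Finite.of_finite
  let b := Module.finBasisOfFinrankEq (ZMod 2) G hG
  refine ⟨fun i => (b i : V), ?_, ?_⟩
  · exact b.linearIndependent.map' G.subtype G.ker_subtype
  · have : Set.range (fun i => ((b i : G) : V)) = G.subtype '' (Set.range b) := by
      rw [← Set.range_comp]; rfl
    rw [this, Submodule.span_image, b.span_eq, Submodule.map_subtype_top]

end FT

/-- The set of `p`-fold products of `T`'s. -/
def Pset (p : ℕ) : Set (GroupAlg V) := {x | ∃ v : Fin p → V, x = ∏ i, T (v i)}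

lemma cons_prod_mem (a : V) {n : ℕ} (u : Fin n → V) :
    T a * ∏ i, T (u i) ∈ Pset (V := V) (n + 1) := by
  refine ⟨Fin.cons a u, ?_⟩
  rw [Fin.prod_univ_succ]
  simp [Fin.cons_zero, Fin.cons_succ]

lemma single_mul_T (w a : V) :
    AddMonoidAlgebra.single w (1 : ZMod 2) * T a = T (w + a) + T w := by
  rw [T, T, T, mul_add, mul_one, AddMonoidAlgebra.single_mul_single, one_mul,
    add_add_add_comm, add_self', add_zero]

lemma single_mul_prod_mem {p : ℕ} (hp : 1 ≤ p) (w : V) (v : Fin p → V) :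
    AddMonoidAlgebra.single w (1 : ZMod 2) * ∏ i, T (v i)
      ∈ Submodule.span (ZMod 2) (Pset (V := V) p) := by
  obtain ⟨n, rfl⟩ : ∃ n, p = n + 1 := ⟨p - 1, (Nat.succ_pred_eq_of_pos hp).symm⟩
  rw [Fin.prod_univ_succ, ← mul_assoc, single_mul_T, add_mul]
  exact add_mem
    (Submodule.subset_span (cons_prod_mem _ _))
    (Submodule.subset_span (cons_prod_mem _ _))

lemma mul_mem_span {p : ℕ} (hp : 1 ≤ p) (r x : GroupAlg V)
    (hx : x ∈ Submodule.span (ZMod 2) (Pset (V := V) p)) :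
    r * x ∈ Submodule.span (ZMod 2) (Pset (V := V) p) := by
  induction hx using Submodule.span_induction with
  | mem x hx =>
      obtain ⟨v, rfl⟩ := hx
      induction r using AddMonoidAlgebra.induction with
      | zero => simp
      | single_add w c f _ _ ih =>
          rw [add_mul]
          refine add_mem ?_ ih
          have hs : (AddMonoidAlgebra.single w c : GroupAlg V)
              = c • AddMonoidAlgebra.single w 1 := by
            rw [AddMonoidAlgebra.smul_single, smul_eq_mul, mul_one]
          rw [hs, smul_mul_assoc]
          exact Submodule.smul_mem _ _ (single_mul_prod_mem hp w v)
  | zero => simp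
  | add a b _ _ ha hb => rw [mul_add]; exact add_mem ha hb
  | smul c a _ ha => rw [mul_smul_comm]; exact Submodule.smul_mem _ _ ha

/-- The span of `p`-fold products, as an ideal. -/
def MIdeal (p : ℕ) (hp : 1 ≤ p) : Ideal (GroupAlg V) where
  carrier := Submodule.span (ZMod 2) (Pset (V := V) p)
  add_mem' := fun h1 h2 => add_mem h1 h2
  zero_mem' := zero_mem _
  smul_mem' := fun c x hx => by simpa [smul_eq_mul] using mul_mem_span hp c x hx

lemma aug_eq_span : augIdeal V = Ideal.span (Set.range (T (V := V))) := by
  apply le_antisymm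
  · intro x hx
    have hx0 : (AddMonoidAlgebra.lift (ZMod 2) (ZMod 2) V 1) x = 0 := hx
    have hxs : ∑ v ∈ x.coeff.support, AddMonoidAlgebra.single v (x.coeff v) = x := by
      exact AddMonoidAlgebra.sum_coeff_single x
    have hcoef : ∑ v ∈ x.coeff.support, x.coeff v = 0 := by
      have h2 := congrArg (AddMonoidAlgebra.lift (ZMod 2) (ZMod 2) V 1) hxs
      rw [map_sum] at h2
      simp only [eps_single] at h2
      rw [h2, hx0]
    have hrepr : x = ∑ v ∈ x.coeff.support, (x.coeff v) • T v := by
      have h3 : ∑ v ∈ x.coeff.support, (x.coeff v) • T v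
          = ∑ v ∈ x.coeff.support, AddMonoidAlgebra.single v (x.coeff v)
            + (∑ v ∈ x.coeff.support, x.coeff v) • (1 : GroupAlg V) := by
        rw [Finset.sum_smul, ← Finset.sum_add_distrib]
        refine Finset.sum_congr rfl fun v _ => ?_
        rw [T, smul_add]
        congr 1
        show x.coeff v • (AddMonoidAlgebra.single v 1 : GroupAlg V) = AddMonoidAlgebra.single v (x.coeff v)
        rw [AddMonoidAlgebra.smul_single, smul_eq_mul, mul_one]
      rw [h3, hcoef, zero_smul, add_zero, hxs]
    rw [hrepr]
    exact Submodule.sum_mem _ fun v _ => Submodule.smul_of_tower_mem _ _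
      (Ideal.subset_span ⟨v, rfl⟩)
  · rw [Ideal.span_le]
    rintro - ⟨v, rfl⟩
    exact T_mem_aug v

end QuillenAux


open QuillenAux

/-- `I_p(V)` is additively generated by the `γ_G`'s where `G` ranges over
`p`-dimensional linear subspaces of `V`. -/
theorem quillen_generated_by_subspaces
    (d p : ℕ) (hp : 1 ≤ p)
    (V : Type*) [AddCommGroup V] [Module (ZMod 2) V] [Fintype V]
    (hd : Module.finrank (ZMod 2) V = d) :
    ((augIdeal V ^ p : Ideal (GroupAlg V)) : Set (GroupAlg V)) =
      (Submodule.span (ZMod 2)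
        {x : GroupAlg V | ∃ G : Submodule (ZMod 2) V,
          Module.finrank (ZMod 2) G = p ∧ x = gammaSet (G : Set V)} :
        Submodule (ZMod 2) (GroupAlg V)) := by
  classical
  apply Set.Subset.antisymm
  · have h1 : augIdeal V ^ p ≤ MIdeal p hp := by
      rw [aug_eq_span]
      have hsp : (Ideal.span (Set.range (T (V := V)))) ^ p
          = Ideal.span (Set.range (T (V := V)) ^ p) := Submodule.span_pow _ _
      rw [hsp, Ideal.span_le]
      intro x hx
      rw [Set.mem_pow] at hx
      obtain ⟨f, hf⟩ := hx
      choose v hv using fun i => (f i).2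
      have hx' : x = ∏ i, T (v i) := by
        rw [← hf, List.prod_ofFn]
        exact Finset.prod_congr rfl fun i _ => (hv i).symm
      show x ∈ Submodule.span (ZMod 2) (Pset p)
      exact Submodule.subset_span ⟨v, hx'⟩
    have h2 : Submodule.span (ZMod 2) (Pset (V := V) p) ≤
        Submodule.span (ZMod 2)
          {x : GroupAlg V | ∃ G : Submodule (ZMod 2) V,
            Module.finrank (ZMod 2) G = p ∧ x = gammaSet (G : Set V)} := by
      rw [Submodule.span_le]
      rintro - ⟨v, rfl⟩
      by_cases h : LinearIndependent (ZMod 2) v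
      · rw [prod_T_indep h]
        exact Submodule.subset_span ⟨Submodule.span (ZMod 2) (Set.range v),
          by rw [finrank_span_eq_card h, Fintype.card_fin], rfl⟩
      · rw [prod_T_dep h]
        exact zero_mem _
    intro x hx
    exact h2 (h1 hx)
  · have hle : Submodule.span (ZMod 2)
        {x : GroupAlg V | ∃ G : Submodule (ZMod 2) V,
          Module.finrank (ZMod 2) G = p ∧ x = gammaSet (G : Set V)} ≤
        Submodule.restrictScalars (ZMod 2) (augIdeal V ^ p) := by
      rw [Submodule.span_le]
      rintro - ⟨G, hG, rfl⟩
      obtain ⟨v, hind, hspan⟩ := exists_indep G hG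
      have hg : gammaSet (G : Set V) = ∏ i, T (v i) := by
        rw [prod_T_indep hind, hspan]
      rw [SetLike.mem_coe, Submodule.restrictScalars_mem, hg]
      have hmem := Ideal.prod_mem_prod (s := Finset.univ)
        (I := fun _ : Fin p => augIdeal V) (x := fun i => T (v i))
        (fun i _ => T_mem_aug (v i))
      simpa [Finset.prod_const, Finset.card_univ, Fintype.card_fin] using hmem
    intro x hx
    exact hle hx
end

section
/- Let V be a d-dimensional vector space over 𝔽₂. Then for every p ≥ 0, dim_{𝔽₂} I_p(V) − dim_{𝔽₂} I_{p+1}(V) = C(d, p), the binomial coefficient d choose p. -/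
set_option linter.unusedSectionVars false
set_option maxHeartbeats 1000000

open Finset

namespace Quillen

lemma double_count {d : ℕ} {M : Type*} [AddCommMonoid M] (hM : ∀ x : M, x + x = 0)
    (f : Finset (Fin d) → M) (S : Finset (Fin d)) :
    ∑ T ∈ S.powerset, ∑ U ∈ T.powerset, f U = f S := by
  have h2 : ∀ (k : ℕ) (x : M), 2 ^ (k + 1) • x = 0 := fun k x => by
    rw [pow_succ, mul_smul, show (2 : ℕ) • x = x + x from two_smul ℕ x, hM, smul_zero]
  rw [Finset.sum_comm' (t' := S.powerset) (s' := fun U => Finset.Icc U S)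
    (fun T U => by
      simp only [Finset.mem_powerset, Finset.mem_Icc, Finset.le_eq_subset]
      constructor
      · rintro ⟨h1, h2⟩; exact ⟨⟨h2, h1⟩, h2.trans h1⟩
      · rintro ⟨⟨h1, h2⟩, h3⟩; exact ⟨h2, h1⟩)]
  rw [Finset.sum_congr rfl fun U _ => Finset.sum_const (f U)]
  rw [Finset.sum_eq_single S
    (fun U hU hne => by
      rw [Finset.card_Icc_finset (Finset.mem_powerset.1 hU)]
      have hlt : U.card < S.card :=
        Finset.card_lt_card (lt_of_le_of_ne (Finset.mem_powerset.1 hU) hne)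
      obtain ⟨k, hk⟩ := Nat.exists_eq_succ_of_ne_zero (by omega : S.card - U.card ≠ 0)
      rw [hk, h2])
    (fun h => absurd (Finset.mem_powerset.2 (Finset.Subset.refl S)) h)]
  rw [Finset.card_Icc_finset (Finset.Subset.refl S), Nat.sub_self, pow_zero, one_smul]

variable {V : Type*} [AddCommGroup V] [Module (ZMod 2) V] {d : ℕ}

lemma add_self (x : GroupAlg V) : x + x = 0 := by
  have := two_smul (ZMod 2) x
  rw [show (2 : ZMod 2) = 0 by decide, zero_smul] at this
  exact this.symm

noncomputable def gen (B : Module.Basis (Fin d) (ZMod 2) V) (i : Fin d) : GroupAlg V :=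
  AddMonoidAlgebra.single (B i) 1 + 1

lemma single_mul_single' (v w : V) :
    (AddMonoidAlgebra.single v 1 : GroupAlg V) * AddMonoidAlgebra.single w 1
      = AddMonoidAlgebra.single (v + w) 1 := by
  rw [AddMonoidAlgebra.single_mul_single, mul_one]

lemma gen_sq (B : Module.Basis (Fin d) (ZMod 2) V) (i : Fin d) : gen B i * gen B i = 0 := by
  have h2 : B i + B i = 0 := by
    have := two_smul (ZMod 2) (B i)
    rwa [show (2 : ZMod 2) = 0 by decide, zero_smul, eq_comm] at this
  unfold gen
  rw [add_mul, mul_add, mul_add, mul_one, one_mul, single_mul_single', h2]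
  rw [show (AddMonoidAlgebra.single (0 : V) (1 : ZMod 2) : GroupAlg V) = 1 from rfl]
  linear_combination add_self (AddMonoidAlgebra.single (B i) (1 : ZMod 2) : GroupAlg V) +
    add_self (1 : GroupAlg V)

noncomputable def mS (B : Module.Basis (Fin d) (ZMod 2) V) (S : Finset (Fin d)) : GroupAlg V :=
  ∏ i ∈ S, gen B i

noncomputable def eEquiv (B : Module.Basis (Fin d) (ZMod 2) V) : Finset (Fin d) ≃ V where
  toFun S := ∑ i ∈ S, B i
  invFun v := univ.filter fun i => B.repr v i = 1
  left_inv S := by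
    ext i
    simp only [mem_filter, mem_univ, true_and, map_sum, Module.Basis.repr_self,
      Finsupp.finset_sum_apply, Finsupp.single_apply]
    rw [Finset.sum_ite_eq' S i fun _ => (1 : ZMod 2)]
    by_cases h : i ∈ S <;> simp [h]
  right_inv v := by
    have key : ∀ c : ZMod 2, c ≠ 1 → c = 0 := by decide
    have h1 : ∑ i ∈ univ.filter (fun i => B.repr v i = 1), B i
        = ∑ i ∈ univ.filter (fun i => B.repr v i = 1), B.repr v i • B i :=
      Finset.sum_congr rfl fun i hi => by rw [(Finset.mem_filter.1 hi).2, one_smul]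
    have h2 : ∑ i ∈ univ.filter (fun i => ¬ B.repr v i = 1), B.repr v i • B i = 0 :=
      Finset.sum_eq_zero fun i hi => by rw [key _ (Finset.mem_filter.1 hi).2, zero_smul]
    have h3 := Finset.sum_filter_add_sum_filter_not univ (fun i => B.repr v i = 1)
      (fun i => B.repr v i • B i)
    show ∑ i ∈ univ.filter (fun i => B.repr v i = 1), B i = v
    rw [h1]
    conv_rhs => rw [← B.sum_repr v, ← h3, h2, add_zero]

noncomputable def bF (B : Module.Basis (Fin d) (ZMod 2) V) :
    Module.Basis (Finset (Fin d)) (ZMod 2) (GroupAlg V) :=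
  (AddMonoidAlgebra.basis V (ZMod 2)).reindex (eEquiv B).symm

lemma bF_apply (B : Module.Basis (Fin d) (ZMod 2) V) (S : Finset (Fin d)) :
    bF B S = AddMonoidAlgebra.single (∑ i ∈ S, B i) 1 := by
  rw [bF]
  exact (Module.Basis.reindex_apply _ _ _).trans (AddMonoidAlgebra.basis_apply _ _)

lemma mS_expand (B : Module.Basis (Fin d) (ZMod 2) V) (S : Finset (Fin d)) :
    mS B S = ∑ T ∈ S.powerset, bF B T := by
  unfold mS gen
  rw [Finset.prod_add]
  refine Finset.sum_congr rfl fun T _ => ?_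
  rw [Finset.prod_const_one, mul_one, AddMonoidAlgebra.prod_single, Finset.prod_const_one,
    bF_apply]

noncomputable def Lmap (B : Module.Basis (Fin d) (ZMod 2) V) : GroupAlg V →ₗ[ZMod 2] GroupAlg V :=
  (bF B).constr (ZMod 2) (mS B)

lemma L_bF (B : Module.Basis (Fin d) (ZMod 2) V) (S : Finset (Fin d)) :
    Lmap B (bF B S) = mS B S := Module.Basis.constr_basis _ _ _ _

lemma L_mS (B : Module.Basis (Fin d) (ZMod 2) V) (S : Finset (Fin d)) :
    Lmap B (mS B S) = bF B S := by
  rw [mS_expand, map_sum]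
  rw [Finset.sum_congr rfl fun T _ => (L_bF B T)]
  rw [Finset.sum_congr rfl fun T _ => (mS_expand B T)]
  exact double_count add_self _ S

lemma LL (B : Module.Basis (Fin d) (ZMod 2) V) : Lmap B ∘ₗ Lmap B = LinearMap.id :=
  (bF B).ext fun S => by simp [L_bF, L_mS]

noncomputable def bm (B : Module.Basis (Fin d) (ZMod 2) V) :
    Module.Basis (Finset (Fin d)) (ZMod 2) (GroupAlg V) :=
  (bF B).map (LinearEquiv.ofLinear (Lmap B) (Lmap B) (LL B) (LL B))

lemma bm_apply (B : Module.Basis (Fin d) (ZMod 2) V) (S : Finset (Fin d)) :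
    bm B S = mS B S := by
  rw [bm, Module.Basis.map_apply]
  exact L_bF B S

lemma mS_mul_disjoint (B : Module.Basis (Fin d) (ZMod 2) V) {S T : Finset (Fin d)}
    (h : Disjoint S T) : mS B S * mS B T = mS B (S ∪ T) :=
  (Finset.prod_union h).symm

lemma mS_mul_ndisjoint (B : Module.Basis (Fin d) (ZMod 2) V) {S T : Finset (Fin d)}
    (h : ¬ Disjoint S T) : mS B S * mS B T = 0 := by
  obtain ⟨i, hiS, hiT⟩ := Finset.not_disjoint_iff.1 h
  rw [mS, mS, ← Finset.mul_prod_erase S _ hiS, ← Finset.mul_prod_erase T _ hiT,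
    mul_mul_mul_comm, gen_sq, zero_mul]

end Quillen

namespace Quillen

variable {V : Type*} [AddCommGroup V] [Module (ZMod 2) V] {d : ℕ}

noncomputable def aug (V : Type*) [AddCommGroup V] : GroupAlg V →ₐ[ZMod 2] ZMod 2 :=
  AddMonoidAlgebra.lift (ZMod 2) (ZMod 2) V 1

lemma mem_augIdeal_iff (x : GroupAlg V) : x ∈ augIdeal V ↔ aug V x = 0 := by
  rw [augIdeal, RingHom.mem_ker]; rfl

lemma aug_single (v : V) : aug V (AddMonoidAlgebra.single v 1) = 1 := by
  rw [aug, AddMonoidAlgebra.lift_single]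
  simp

lemma aug_gen (B : Module.Basis (Fin d) (ZMod 2) V) (i : Fin d) : aug V (gen B i) = 0 := by
  rw [gen, map_add, aug_single, map_one]
  decide

lemma aug_mS (B : Module.Basis (Fin d) (ZMod 2) V) {S : Finset (Fin d)} (h : S.Nonempty) :
    aug V (mS B S) = 0 := by
  obtain ⟨i, hi⟩ := h
  rw [mS, map_prod]
  exact Finset.prod_eq_zero hi (aug_gen B i)

lemma gen_mem (B : Module.Basis (Fin d) (ZMod 2) V) (i : Fin d) : gen B i ∈ augIdeal V :=
  (mem_augIdeal_iff _).2 (aug_gen B i)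

lemma mS_mem_pow (B : Module.Basis (Fin d) (ZMod 2) V) (S : Finset (Fin d)) :
    mS B S ∈ augIdeal V ^ S.card := by
  induction S using Finset.cons_induction with
  | empty => rw [mS, Finset.prod_empty, Finset.card_empty, pow_zero, Ideal.one_eq_top]; trivial
  | cons a s ha ih =>
      rw [mS, Finset.prod_cons, Finset.card_cons, pow_succ']
      exact Ideal.mul_mem_mul (gen_mem B a) ih

noncomputable def Wp (B : Module.Basis (Fin d) (ZMod 2) V) (p : ℕ) :
    Submodule (ZMod 2) (GroupAlg V) :=
  Submodule.span (ZMod 2) (mS B '' {S | p ≤ S.card})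

lemma aug_le_W1 (B : Module.Basis (Fin d) (ZMod 2) V) {x : GroupAlg V} (hx : x ∈ augIdeal V) :
    x ∈ Wp B 1 := by
  set c := (bm B).repr x with hc
  have hre : x = ∑ S : Finset (Fin d), c S • mS B S := by
    conv_lhs => rw [← (bm B).sum_repr x]
    exact Finset.sum_congr rfl fun S _ => by rw [bm_apply]
  have hc0 : c ∅ = 0 := by
    have h1 : aug V x = ∑ S : Finset (Fin d), c S • aug V (mS B S) := by
      rw [hre, map_sum]
      exact Finset.sum_congr rfl fun S _ => by rw [map_smul]
    have h2 : ∑ S : Finset (Fin d), c S • aug V (mS B S) = c ∅ := by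
      rw [Finset.sum_eq_single ∅
        (fun S _ hne => by
          rw [aug_mS B (Finset.nonempty_iff_ne_empty.2 hne), smul_zero])
        (fun h => absurd (Finset.mem_univ ∅) h)]
      rw [mS, Finset.prod_empty, map_one, smul_eq_mul, mul_one]
    rw [← h2, ← h1, (mem_augIdeal_iff x).1 hx]
  rw [hre]
  refine Submodule.sum_mem _ fun S _ => ?_
  by_cases hS : S = ∅
  · rw [hS, hc0, zero_smul]; exact Submodule.zero_mem _
  · exact Submodule.smul_mem _ _ (Submodule.subset_span
      ⟨S, Finset.card_pos.2 (Finset.nonempty_iff_ne_empty.2 hS), rfl⟩)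

lemma W_mul (B : Module.Basis (Fin d) (ZMod 2) V) (p : ℕ) : Wp B p * Wp B 1 ≤ Wp B (p + 1) := by
  rw [Wp, Wp, Submodule.span_mul_span]
  refine Submodule.span_le.2 ?_
  rintro z hz
  rw [Set.mem_mul] at hz
  obtain ⟨a, ⟨S, hS, rfl⟩, b, ⟨T, hT, rfl⟩, rfl⟩ := hz
  by_cases h : Disjoint S T
  · rw [mS_mul_disjoint B h]
    refine Submodule.subset_span ⟨S ∪ T, ?_, rfl⟩
    have := Finset.card_union_of_disjoint h
    simp only [Set.mem_setOf_eq] at hS hT ⊢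
    omega
  · rw [mS_mul_ndisjoint B h]
    exact Submodule.zero_mem _

lemma pow_eq (B : Module.Basis (Fin d) (ZMod 2) V) (p : ℕ) :
    Submodule.restrictScalars (ZMod 2) (augIdeal V ^ p : Ideal (GroupAlg V)) = Wp B p := by
  induction p with
  | zero =>
      have htop : Wp B 0 = ⊤ := by
        rw [eq_top_iff, ← (bm B).span_eq]
        refine Submodule.span_le.2 ?_
        rintro z ⟨S, rfl⟩
        exact Submodule.subset_span ⟨S, Nat.zero_le _, (bm_apply B S).symm⟩
      rw [htop, pow_zero, Ideal.one_eq_top]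
      rfl
  | succ p ih =>
      apply le_antisymm
      · intro x hx
        rw [Submodule.restrictScalars_mem, pow_succ] at hx
        refine Submodule.mul_induction_on hx (fun m hm n hn => ?_)
          (fun a b ha hb => Submodule.add_mem _ ha hb)
        have hm' : m ∈ Wp B p := by rw [← ih]; exact hm
        have hn' : n ∈ Wp B 1 := aug_le_W1 B hn
        exact W_mul B p (Submodule.mul_mem_mul hm' hn')
      · refine Submodule.span_le.2 ?_
        rintro z ⟨S, hS, rfl⟩
        show mS B S ∈ augIdeal V ^ (p + 1)
        exact Ideal.pow_le_pow_right hS (mS_mem_pow B S)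

lemma finrank_Wp (B : Module.Basis (Fin d) (ZMod 2) V) (p : ℕ) :
    Module.finrank (ZMod 2) (Wp B p)
      = (univ.filter fun S : Finset (Fin d) => p ≤ S.card).card := by
  classical
  have hfun : ⇑(bm B) = mS B := funext fun S => bm_apply B S
  have hinj : Function.Injective (mS B) := hfun ▸ (bm B).injective
  set A : Finset (Finset (Fin d)) := univ.filter fun S => p ≤ S.card with hA
  have himg : mS B '' {S | p ≤ S.card} = ↑(A.image (mS B)) := by
    ext z
    simp only [Set.mem_image, Set.mem_setOf_eq, Finset.coe_image, Finset.mem_coe,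
      Finset.mem_image, hA, Finset.mem_filter, Finset.mem_univ, true_and]
  have hli : LinearIndependent (ZMod 2) ((↑) : (A.image (mS B) : Finset (GroupAlg V)) → GroupAlg V) := by
    refine (bm B).linearIndependent.linearIndepOn_id.mono ?_
    intro z hz
    obtain ⟨S, -, rfl⟩ := Finset.mem_image.1 (Finset.mem_coe.1 hz)
    exact ⟨S, bm_apply B S⟩
  rw [Wp, himg, finrank_span_finset_eq_card hli, Finset.card_image_of_injective _ hinj]

end Quillen

/-- For a `d`-dimensional `𝔽₂`-vector space `V` and every `p ≥ 0`,
`dim I_p(V) − dim I_{p+1}(V) = C(d, p)`. Since `I_{p+1}(V) ⊆ I_p(V)`, this is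
stated in the equivalent form `dim I_p(V) = dim I_{p+1}(V) + C(d, p)`. -/
theorem quillen_graded_dimension
    (d p : ℕ)
    (V : Type*) [AddCommGroup V] [Module (ZMod 2) V] [Fintype V]
    (hd : Module.finrank (ZMod 2) V = d) :
    Module.finrank (ZMod 2)
        (Submodule.restrictScalars (ZMod 2) (augIdeal V ^ p : Ideal (GroupAlg V)))
      = Module.finrank (ZMod 2)
          (Submodule.restrictScalars (ZMod 2) (augIdeal V ^ (p + 1) : Ideal (GroupAlg V)))
        + Nat.choose d p := by
  let B : Module.Basis (Fin d) (ZMod 2) V := (Module.finBasis (ZMod 2) V).reindex (finCongr hd)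
  rw [Quillen.pow_eq B p, Quillen.pow_eq B (p + 1), Quillen.finrank_Wp, Quillen.finrank_Wp]
  have hsplit : (univ.filter fun S : Finset (Fin d) => p ≤ S.card)
      = (univ.filter fun S : Finset (Fin d) => p + 1 ≤ S.card)
        ∪ (univ.filter fun S : Finset (Fin d) => S.card = p) := by
    ext S
    simp only [mem_filter, mem_union, mem_univ, true_and]
    omega
  rw [hsplit, Finset.card_union_of_disjoint (by
    rw [Finset.disjoint_left]
    intro S h1 h2
    simp only [mem_filter, mem_univ, true_and] at h1 h2
    omega)]
  congr 1
  have hps : (univ.filter fun S : Finset (Fin d) => S.card = p)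
      = Finset.powersetCard p (univ : Finset (Fin d)) := by
    rw [Finset.powersetCard_eq_filter, Finset.powerset_univ]
  rw [hps, Finset.card_powersetCard, Finset.card_univ, Fintype.card_fin]
end

section
/- Let V be a d-dimensional vector space over 𝔽₂ and let p ≥ 1. Then I_p(V) equals the 𝔽₂-linear span of the elements γ_U, where U ranges over all p-dimensional affine subspaces of V (cosets U = v + G with G a p-dimensional linear subspace of V). -/
open Finset

set_option linter.unusedSectionVars false
set_option linter.unusedVariables false

section Aux

variable {V : Type*} [AddCommGroup V] [Module (ZMod 2) V] [Fintype V]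

/-- `T_v` -/
noncomputable abbrev TT (v : V) : GroupAlg V := AddMonoidAlgebra.single v (1 : ZMod 2)

lemma addSelf (x : GroupAlg V) : x + x = 0 := by
  have : ((2 : ZMod 2)) • x = x + x := two_smul _ x
  rw [show (2 : ZMod 2) = 0 by decide, zero_smul] at this
  exact this.symm

lemma gammaSet_singleton (w : V) : gammaSet {w} = TT w := by
  simp [gammaSet]

lemma gamma_union {S T : Set V} (h : Disjoint S T) :
    gammaSet (S ∪ T) = gammaSet S + gammaSet T := by
  classical
  unfold gammaSet
  rw [Set.Finite.toFinset_union (Set.toFinite S) (Set.toFinite T)]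
  exact Finset.sum_union (Set.Finite.disjoint_toFinset.mpr h)

lemma single_mul_gamma (w : V) (S : Set V) :
    TT w * gammaSet S = gammaSet ((w + ·) '' S) := by
  classical
  unfold gammaSet
  rw [Set.Finite.toFinset_image (w + ·) (Set.toFinite S),
    Finset.sum_image (by intro a _ b _ h; exact add_left_cancel h), Finset.mul_sum]
  simp [AddMonoidAlgebra.single_mul_single]

end Aux

set_option linter.unusedSectionVars false

section Aux2
variable {V : Type*} [AddCommGroup V] [Module (ZMod 2) V] [Fintype V]

lemma coset_translate {G : Submodule (ZMod 2) V} {v : V} (hv : v ∈ G) (w : V) :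
    ((v + w) + ·) '' (G : Set V) = (w + ·) '' (G : Set V) := by
  ext x
  constructor
  · rintro ⟨g, hg, rfl⟩
    exact ⟨v + g, G.add_mem hv hg, by abel⟩
  · rintro ⟨g, hg, rfl⟩
    exact ⟨g - v, G.sub_mem hg hv, by abel⟩

lemma image_comp_add (v w : V) (S : Set V) :
    (v + ·) '' ((w + ·) '' S) = ((v + w) + ·) '' S := by
  rw [← Set.image_comp]
  apply Set.image_congr
  intro a _
  simp [add_assoc]

lemma sup_span_singleton_coe {G : Submodule (ZMod 2) V} {v : V} :
    ((G ⊔ Submodule.span (ZMod 2) {v} : Submodule (ZMod 2) V) : Set V)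
      = (G : Set V) ∪ (v + ·) '' (G : Set V) := by
  ext x
  simp only [SetLike.mem_coe, Submodule.mem_sup, Set.mem_union, Set.mem_image]
  constructor
  · rintro ⟨g, hg, s, hs, rfl⟩
    rcases Submodule.mem_span_singleton.mp hs with ⟨c, rfl⟩
    rcases (by decide : ∀ c : ZMod 2, c = 0 ∨ c = 1) c with rfl | rfl
    · left; simpa using hg
    · right; exact ⟨g, hg, by rw [one_smul]; abel⟩
  · rintro (hx | ⟨g, hg, rfl⟩)
    · exact ⟨x, hx, 0, Submodule.zero_mem _, add_zero x⟩
    · exact ⟨g, hg, v, Submodule.mem_span_singleton_self v, add_comm g v⟩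

lemma coset_disjoint {G : Submodule (ZMod 2) V} {v : V} (hv : v ∉ G) (w : V) :
    Disjoint ((w + ·) '' (G : Set V)) (((w + v) + ·) '' (G : Set V)) := by
  rw [Set.disjoint_left]
  rintro x ⟨g₁, hg₁, rfl⟩ ⟨g₂, hg₂, hx⟩
  apply hv
  have : v = g₁ - g₂ := by
    have h : w + (v + g₂) = w + g₁ := by rw [← add_assoc]; exact hx
    have h2 := add_left_cancel h
    exact eq_sub_of_add_eq h2
  rw [this]
  exact G.sub_mem hg₁ hg₂

lemma mul_gamma_of_mem {G : Submodule (ZMod 2) V} {v : V} (hv : v ∈ G) (w : V) :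
    (TT v + 1) * gammaSet ((w + ·) '' (G : Set V)) = 0 := by
  rw [add_mul, one_mul, single_mul_gamma, image_comp_add, coset_translate hv]
  exact addSelf _

lemma mul_gamma_of_not_mem {G : Submodule (ZMod 2) V} {v : V} (hv : v ∉ G) (w : V) :
    (TT v + 1) * gammaSet ((w + ·) '' (G : Set V))
      = gammaSet ((w + ·) '' ((G ⊔ Submodule.span (ZMod 2) {v} : Submodule (ZMod 2) V) : Set V)) := by
  rw [sup_span_singleton_coe, Set.image_union, image_comp_add w v (G : Set V)]
  rw [gamma_union (coset_disjoint hv w)]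
  rw [add_mul, one_mul, single_mul_gamma, image_comp_add, add_comm v w, add_comm]

end Aux2

section Aux3
variable {V : Type*} [AddCommGroup V] [Module (ZMod 2) V] [Fintype V]

lemma TT_add_one_mem_aug (v : V) : (TT v + 1) ∈ augIdeal V := by
  rw [augIdeal, RingHom.mem_ker]
  simp [map_add, AddMonoidAlgebra.lift_single]
  decide

lemma aug_le_span :
    (augIdeal V : Set (GroupAlg V)) ⊆
      (Submodule.span (ZMod 2) {y : GroupAlg V | ∃ v : V, y = TT v + 1} : Submodule (ZMod 2) (GroupAlg V)) := by
  intro x hx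
  rw [SetLike.mem_coe, augIdeal, RingHom.mem_ker] at hx
  have hxs : (∑ v ∈ x.coeff.support, x.coeff v) = 0 := by
    rw [AddMonoidAlgebra.lift_apply] at hx
    simpa [Finsupp.sum] using hx
  have hxe : x = ∑ v ∈ x.coeff.support, (x.coeff v) • (TT v + 1) := by
    have h1 : ∑ v ∈ x.coeff.support, (x.coeff v) • (TT v + 1)
        = (∑ v ∈ x.coeff.support, (x.coeff v) • (TT v : GroupAlg V)) + (∑ v ∈ x.coeff.support, x.coeff v) • (1 : GroupAlg V) := by
      rw [Finset.sum_smul, ← Finset.sum_add_distrib]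
      exact Finset.sum_congr rfl fun v _ => smul_add _ _ _
    rw [h1, hxs, zero_smul, add_zero]
    conv_lhs => rw [← AddMonoidAlgebra.sum_coeff_single x]
    rw [Finsupp.sum]
    refine Finset.sum_congr rfl fun v _ => ?_
    rw [AddMonoidAlgebra.smul_single', mul_one]
  rw [hxe]
  exact Submodule.sum_mem _ fun v _ =>
    Submodule.smul_mem _ _ (Submodule.subset_span ⟨v, rfl⟩)

end Aux3

section Main
variable {V : Type*} [AddCommGroup V] [Module (ZMod 2) V] [Fintype V]

lemma gamma_bot (w : V) :
    gammaSet ((w + ·) '' ((⊥ : Submodule (ZMod 2) V) : Set V)) = TT w := by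
  have h : ((w + ·) '' ((⊥ : Submodule (ZMod 2) V) : Set V)) = {w} := by
    rw [Submodule.bot_coe]; simp
  rw [h]
  exact gammaSet_singleton w

lemma mem_pow_of_indep : ∀ (p : ℕ) (vs : Fin p → V),
    LinearIndependent (ZMod 2) vs → ∀ w : V,
    gammaSet ((w + ·) '' ((Submodule.span (ZMod 2) (Set.range vs) : Submodule (ZMod 2) V) : Set V))
      ∈ augIdeal V ^ p := by
  intro p
  induction p with
  | zero =>
    intro vs _ w
    rw [Set.range_eq_empty vs, Submodule.span_empty, gamma_bot]
    simp [Ideal.one_eq_top]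
  | succ p ih =>
    intro vs hvs w
    set v := vs (Fin.last p) with hv
    set G' : Submodule (ZMod 2) V :=
      Submodule.span (ZMod 2) (Set.range (vs ∘ Fin.castSucc)) with hG'
    have hlast : (Fin.last p) ∉ Set.range (Fin.castSucc : Fin p → Fin (p+1)) := by
      rintro ⟨i, hi⟩
      exact (Fin.castSucc_lt_last i).ne hi
    have hvG' : v ∉ G' := by
      have := hvs.notMem_span_image (s := Set.range (Fin.castSucc : Fin p → Fin (p+1)))
        (x := Fin.last p) hlast
      rw [hG', Set.range_comp]
      exact this
    have hspan : Submodule.span (ZMod 2) (Set.range vs) = G' ⊔ Submodule.span (ZMod 2) {v} := by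
      have huniv : (Set.range (Fin.castSucc : Fin p → Fin (p+1))) ∪ {Fin.last p} = Set.univ := by
        ext i
        simp only [Set.mem_union, Set.mem_range, Set.mem_singleton_iff, Set.mem_univ, iff_true]
        rcases eq_or_ne i (Fin.last p) with h | h
        · right; exact h
        · left; exact ⟨i.castPred h, Fin.castSucc_castPred i h⟩
      rw [hG', Set.range_comp, ← Submodule.span_union, ← Set.image_singleton (f := vs),
        ← Set.image_union, huniv, Set.image_univ]
    rw [hspan, ← mul_gamma_of_not_mem hvG' w, pow_succ']
    exact Ideal.mul_mem_mul (TT_add_one_mem_aug v) (ih _ (hvs.comp _ (Fin.castSucc_injective p)) w)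

lemma gamma_mem_pow (G : Submodule (ZMod 2) V) (w : V) :
    gammaSet ((w + ·) '' (G : Set V)) ∈ augIdeal V ^ (Module.finrank (ZMod 2) G) := by
  set b := Module.finBasis (ZMod 2) G
  set vs : Fin (Module.finrank (ZMod 2) G) → V := fun i => ((b i : G) : V) with hvs
  have hindep : LinearIndependent (ZMod 2) vs :=
    b.linearIndependent.map' G.subtype (Submodule.ker_subtype G)
  have hspan : Submodule.span (ZMod 2) (Set.range vs) = G := by
    have : Set.range vs = G.subtype '' (Set.range b) := by
      rw [← Set.range_comp]; rfl
    rw [this, Submodule.span_image, b.span_eq, Submodule.map_top, Submodule.range_subtype]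
  have := mem_pow_of_indep _ vs hindep w
  rwa [hspan] at this

end Main

section Main2
variable {V : Type*} [AddCommGroup V] [Module (ZMod 2) V] [Fintype V]

noncomputable def spanE (V : Type*) [AddCommGroup V] [Module (ZMod 2) V] [Fintype V] (p : ℕ) :
    Submodule (ZMod 2) (GroupAlg V) :=
  Submodule.span (ZMod 2)
    {x : GroupAlg V | ∃ (v : V) (G : Submodule (ZMod 2) V),
      Module.finrank (ZMod 2) G = p ∧ x = gammaSet ((v + ·) '' (G : Set V))}

lemma pow_le_spanE : ∀ (p : ℕ) (x : GroupAlg V), x ∈ augIdeal V ^ p → x ∈ spanE V p := by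
  intro p
  induction p with
  | zero =>
    intro x _
    have hx : x ∈ Submodule.span (ZMod 2) (Set.range fun v : V => TT v) := by
      have h := Module.Basis.mem_span (AddMonoidAlgebra.basis V (ZMod 2)) x
      rwa [show ⇑(AddMonoidAlgebra.basis V (ZMod 2)) = fun v => TT v from funext fun v => AddMonoidAlgebra.basis_apply _ v] at h
    refine Submodule.span_mono ?_ hx
    rintro y ⟨w, rfl⟩
    exact ⟨w, ⊥, finrank_bot _ _, (gamma_bot w).symm⟩
  | succ p ih =>
    intro x hx
    rw [pow_succ'] at hx
    refine Submodule.mul_induction_on hx ?_ (fun a b ha hb => add_mem ha hb)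
    intro a ha b hb
    have hb' : b ∈ spanE V p := ih b hb
    have ha' : a ∈ Submodule.span (ZMod 2) {y : GroupAlg V | ∃ v : V, y = TT v + 1} :=
      aug_le_span ha
    clear ha hb hx
    induction ha' using Submodule.span_induction with
    | mem y hy =>
      obtain ⟨v, rfl⟩ := hy
      induction hb' using Submodule.span_induction with
      | mem z hz =>
        obtain ⟨w, G, hG, rfl⟩ := hz
        by_cases hv : v ∈ G
        · rw [mul_gamma_of_mem hv]
          exact zero_mem _
        · rw [mul_gamma_of_not_mem hv]
          apply Submodule.subset_span
          refine ⟨w, G ⊔ Submodule.span (ZMod 2) {v}, ?_, rfl⟩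
          have hv0 : v ≠ 0 := fun h => hv (h ▸ G.zero_mem)
          have hinf : G ⊓ Submodule.span (ZMod 2) {v} = ⊥ := by
            ext y
            simp only [Submodule.mem_inf, Submodule.mem_bot]
            constructor
            · rintro ⟨hyG, hys⟩
              rcases Submodule.mem_span_singleton.mp hys with ⟨c, rfl⟩
              rcases (by decide : ∀ c : ZMod 2, c = 0 ∨ c = 1) c with rfl | rfl
              · rw [zero_smul]
              · rw [one_smul] at hyG ⊢
                exact absurd hyG hv
            · rintro rfl
              exact ⟨Submodule.zero_mem _, Submodule.zero_mem _⟩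
          have hdim := Submodule.finrank_sup_add_finrank_inf_eq G (Submodule.span (ZMod 2) {v})
          rw [hinf, finrank_bot, finrank_span_singleton hv0, hG, add_zero] at hdim
          exact hdim
      | zero => rw [mul_zero]; exact zero_mem _
      | add z₁ z₂ _ _ h1 h2 => rw [mul_add]; exact add_mem h1 h2
      | smul c z _ h => rw [mul_smul_comm]; exact Submodule.smul_mem _ _ h
    | zero => rw [zero_mul]; exact zero_mem _
    | add a₁ a₂ _ _ h1 h2 => rw [add_mul]; exact add_mem h1 h2
    | smul c a _ h => rw [smul_mul_assoc]; exact Submodule.smul_mem _ _ h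

end Main2


/-- `I_p(V)` equals the `𝔽₂`-linear span of the `γ_U`'s where `U` ranges over
`p`-dimensional affine subspaces of `V` (cosets `U = v + G` with `G` a
`p`-dimensional linear subspace). -/
theorem quillen_generated_by_affine_subspaces
    (d p : ℕ) (hp : 1 ≤ p)
    (V : Type*) [AddCommGroup V] [Module (ZMod 2) V] [Fintype V]
    (hd : Module.finrank (ZMod 2) V = d) :
    ((augIdeal V ^ p : Ideal (GroupAlg V)) : Set (GroupAlg V)) =
      (Submodule.span (ZMod 2)
        {x : GroupAlg V | ∃ (v : V) (G : Submodule (ZMod 2) V),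
          Module.finrank (ZMod 2) G = p ∧ x = gammaSet ((v + ·) '' (G : Set V))} :
        Submodule (ZMod 2) (GroupAlg V)) := by
  apply Set.Subset.antisymm
  · intro x hx
    exact pow_le_spanE p x hx
  · intro x hx
    have hle : Submodule.span (ZMod 2)
        {x : GroupAlg V | ∃ (v : V) (G : Submodule (ZMod 2) V),
          Module.finrank (ZMod 2) G = p ∧ x = gammaSet ((v + ·) '' (G : Set V))}
        ≤ (augIdeal V ^ p).restrictScalars (ZMod 2) := by
      rw [Submodule.span_le]
      rintro y ⟨w, G, hG, rfl⟩
      exact hG ▸ gamma_mem_pow G w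
    exact hle hx
end

section
/- Let V be a finite-dimensional 𝔽₂-vector space and p ≥ 0. There exists an 𝔽₂-linear isomorphism φ : ⋀^p V → I_p(V)/I_{p+1}(V) such that φ(v₁ ∧ … ∧ v_p) = γ_{span{v₁, …, v_p}} + I_{p+1}(V) for every linearly independent tuple v₁, …, v_p of vectors of V. -/
open Finset

set_option linter.unusedSectionVars false

open Pointwise

namespace QGR


lemma char2_add_self {M : Type*} [AddCommGroup M] [Module (ZMod 2) M] (x : M) : x + x = 0 := by
  rw [← two_smul (ZMod 2) x, show (2 : ZMod 2) = 0 by decide, zero_smul]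

lemma zmod2_cases (a : ZMod 2) : a = 0 ∨ a = 1 := by revert a; decide

variable {V : Type*} [AddCommGroup V] [Module (ZMod 2) V]

/-- `T_v` -/
noncomputable abbrev TT (v : V) : GroupAlg V := AddMonoidAlgebra.single v 1

/-- `y_v = 1 + T_v` -/
lemma two_eq_zeroA : (2 : GroupAlg V) = 0 := by
  rw [← one_add_one_eq_two]; exact char2_add_self 1

noncomputable def yy (v : V) : GroupAlg V := TT 0 + TT v

noncomputable def epsA : GroupAlg V →ₐ[ZMod 2] ZMod 2 :=
  AddMonoidAlgebra.lift (ZMod 2) (ZMod 2) V 1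

lemma T_mul (a b : V) : (TT a) * (TT b) = TT (a + b) := by
  simp [AddMonoidAlgebra.single_mul_single]

lemma T_zero : (TT (0 : V)) = 1 := (AddMonoidAlgebra.one_def).symm

lemma eps_T (v : V) : epsA (TT v) = 1 := by
  simp [epsA, AddMonoidAlgebra.lift_single]

lemma augIdeal_eq_ker : augIdeal V = RingHom.ker (epsA (V := V)) := rfl

lemma yy_mem (v : V) : yy v ∈ augIdeal V := by
  rw [augIdeal_eq_ker]
  simp only [RingHom.mem_ker, yy, map_add, eps_T]
  decide

lemma yy_zero : yy (0 : V) = 0 := char2_add_self _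

lemma yy_mul (x y : V) : yy x * yy y = TT 0 + TT x + TT y + TT (x + y) := by
  simp only [yy, add_mul, mul_add, T_mul, zero_add, add_zero]
  abel

lemma yy_sq (x : V) : yy x * yy x = 0 := by
  rw [yy_mul, char2_add_self x]
  linear_combination (TT (0:V) + TT x) * (two_eq_zeroA (V := V))

lemma yy_add (x y : V) : yy (x + y) = yy x + yy y + yy x * yy y := by
  rw [yy_mul, yy, yy, yy]
  linear_combination -(TT (0:V) + TT x + TT y) * (two_eq_zeroA (V := V))

lemma augIdeal_eq_span : augIdeal V = Ideal.span (Set.range (yy (V := V))) := by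
  refine le_antisymm ?_ (Ideal.span_le.2 ?_)
  · intro x hx
    rw [augIdeal_eq_ker, RingHom.mem_ker] at hx
    have hrep : x = ∑ v ∈ x.coeff.support, AddMonoidAlgebra.single v (x.coeff v) := by
      conv_lhs => rw [← AddMonoidAlgebra.sum_coeff_single x]
      rfl
    have hsingle : ∀ v : V, AddMonoidAlgebra.single v (x.coeff v) = x.coeff v • TT v := by
      intro v
      rw [AddMonoidAlgebra.smul_single', mul_one]
    have heps : ∑ v ∈ x.coeff.support, x.coeff v = 0 := by
      have h1 := congrArg (epsA (V := V)) hrep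
      rw [hx, map_sum] at h1
      have h2 : ∀ v ∈ x.coeff.support, epsA (AddMonoidAlgebra.single v (x.coeff v)) = x.coeff v := by
        intro v _
        rw [hsingle, map_smul, eps_T, smul_eq_mul, mul_one]
      rw [Finset.sum_congr rfl h2] at h1
      exact h1.symm
    have hT : ∀ v : V, TT v = yy v + 1 := by
      intro v
      rw [yy, T_zero]
      linear_combination -(two_eq_zeroA (V := V))
    have hx2 : x = (∑ v ∈ x.coeff.support, x.coeff v • yy v) + (∑ v ∈ x.coeff.support, x.coeff v) • (1 : GroupAlg V) := by
      conv_lhs => rw [hrep]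
      rw [Finset.sum_smul, ← Finset.sum_add_distrib]
      refine Finset.sum_congr rfl fun v _ => ?_
      rw [hsingle v, hT v, smul_add]
    rw [heps, zero_smul, add_zero] at hx2
    rw [hx2]
    refine Submodule.sum_mem _ fun v _ => Submodule.smul_of_tower_mem _ _ ?_
    exact Ideal.subset_span ⟨v, rfl⟩
  · rintro _ ⟨v, rfl⟩
    exact yy_mem v





local notation "E" => ExteriorAlgebra (ZMod 2) V
local notation "eι" => ExteriorAlgebra.ι (ZMod 2) (M := V)

lemma e_two_eq_zero : (2 : E) = 0 := by
  have h := char2_add_self (1 : E)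
  rw [one_add_one_eq_two] at h
  exact h

lemma eι_comm (v : V) (x : E) : eι v * x = x * eι v := by
  induction x using ExteriorAlgebra.induction with
  | algebraMap r => exact (Algebra.commutes r _).symm
  | ι w =>
      have h := ExteriorAlgebra.ι_add_mul_swap (R := ZMod 2) v w
      have h2 : eι v * eι w + (eι w * eι v + eι w * eι v) = eι v * eι w := by
        rw [char2_add_self, add_zero]
      rw [← h2, ← add_assoc, h, zero_add]
  | mul a b ha hb => rw [← mul_assoc, ha, mul_assoc, hb, mul_assoc]
  | add a b ha hb => rw [mul_add, add_mul, ha, hb]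

lemma e_mul_comm (x y : E) : x * y = y * x := by
  induction x using ExteriorAlgebra.induction with
  | algebraMap r => exact Algebra.commutes r y
  | ι v => exact eι_comm v y
  | mul a b ha hb => rw [mul_assoc, hb, ← mul_assoc, ha, mul_assoc]
  | add a b ha hb => rw [add_mul, mul_add, ha, hb]

noncomputable scoped instance : CommRing E :=
  { (inferInstance : Ring E) with mul_comm := e_mul_comm }

/-- The (submodule of elements of) degree `≥ k` part of the exterior algebra. -/
noncomputable def P (k : ℕ) : Submodule (ZMod 2) E :=
  ⨆ i : {i : ℕ // k ≤ i}, (⋀[ZMod 2]^(i : ℕ) V)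

lemma mem_P {x : E} {i k : ℕ} (h : k ≤ i) (hx : x ∈ ⋀[ZMod 2]^i V) : x ∈ P k :=
  le_iSup (fun i : {i : ℕ // k ≤ i} => (⋀[ZMod 2]^(i : ℕ) V : Submodule (ZMod 2) E)) ⟨i, h⟩ hx

lemma P_le {k l : ℕ} (h : k ≤ l) : (P l : Submodule (ZMod 2) E) ≤ P k :=
  iSup_le fun i => le_iSup (fun i : {i : ℕ // k ≤ i} =>
    (⋀[ZMod 2]^(i : ℕ) V : Submodule (ZMod 2) E)) ⟨i, le_trans h i.2⟩

lemma eι_mem_one (v : V) : eι v ∈ ⋀[ZMod 2]^1 V := by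
  rw [show (⋀[ZMod 2]^1 V : Submodule (ZMod 2) E)
      = LinearMap.range (ExteriorAlgebra.ι (ZMod 2) : V →ₗ[ZMod 2] E) from pow_one _]
  exact LinearMap.mem_range_self _ v

lemma P_mul {j k : ℕ} {x z : E} (hx : x ∈ P j) (hz : z ∈ P k) : x * z ∈ P (j + k) := by
  refine Submodule.iSup_induction _ (motive := fun x => x * z ∈ P (j + k)) hx ?_ (by simp) ?_
  · rintro ⟨i, hi⟩ x hxi
    refine Submodule.iSup_induction _ (motive := fun z => x * z ∈ P (j + k)) hz ?_ (by simp) ?_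
    · rintro ⟨i', hi'⟩ z hzi
      exact mem_P (add_le_add hi hi') (SetLike.mul_mem_graded hxi hzi)
    · intro a b ha hb
      rw [mul_add]; exact add_mem ha hb
  · intro a b ha hb
    rw [add_mul]; exact add_mem ha hb

lemma P_zero_eq_top : (P 0 : Submodule (ZMod 2) E) = ⊤ := by
  rw [eq_top_iff]
  intro x _
  have hx : x ∈ ⨆ i : ℕ, (⋀[ZMod 2]^i V : Submodule (ZMod 2) E) := by
    rw [(DirectSum.Decomposition.isInternal
      (fun i => (⋀[ZMod 2]^i V : Submodule (ZMod 2) E))).submodule_iSup_eq_top]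
    trivial
  refine Submodule.iSup_induction _ (motive := fun y => y ∈ P 0) hx ?_ (by simp) ?_
  · intro i y hy; exact mem_P (Nat.zero_le i) hy
  · intro a b ha hb; exact add_mem ha hb

lemma mul_P {k : ℕ} (x : E) {z : E} (hz : z ∈ P k) : x * z ∈ P k := by
  have hx0 : x ∈ P 0 := by rw [P_zero_eq_top]; trivial
  have := P_mul hx0 hz
  rwa [zero_add] at this

lemma P_decompose_eq_zero {x : E} {k j : ℕ} (hx : x ∈ P k) (hj : j < k) :
    ((DirectSum.decompose (fun i => (⋀[ZMod 2]^i V : Submodule (ZMod 2) E)) x j : E)) = 0 := by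
  refine Submodule.iSup_induction _
    (motive := fun x => ((DirectSum.decompose (fun i => (⋀[ZMod 2]^i V : Submodule (ZMod 2) E)) x j : E)) = 0)
    hx ?_ (by simp) ?_
  · intro i y hy
    have hi := i.2
    exact DirectSum.decompose_of_mem_ne _ hy (by omega)
  · intro a b ha hb
    rw [DirectSum.decompose_add]
    simp only [DirectSum.add_apply, Submodule.coe_add, ha, hb, add_zero]

lemma prod_mem_P {ι : Type*} (s : Finset ι) (f : ι → E) (h : ∀ i ∈ s, f i ∈ P 1) :
    ∏ i ∈ s, f i ∈ P s.card := by
  classical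
  induction s using Finset.induction_on with
  | empty => simp only [Finset.prod_empty, Finset.card_empty]; rw [P_zero_eq_top]; trivial
  | @insert a s ha ih =>
      rw [Finset.prod_insert ha, Finset.card_insert_of_notMem ha, add_comm s.card 1]
      exact P_mul (h a (Finset.mem_insert_self a s))
        (ih fun i hi => h i (Finset.mem_insert_of_mem hi))

lemma prod_add_mem_P {ι : Type*} (s : Finset ι) (a h : ι → E)
    (ha : ∀ i ∈ s, a i ∈ P 1) (hh : ∀ i ∈ s, h i ∈ P 2) :
    (∏ i ∈ s, (a i + h i)) + ∏ i ∈ s, a i ∈ P (s.card + 1) := by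
  classical
  induction s using Finset.induction_on with
  | empty => simp only [Finset.prod_empty, Finset.card_empty, zero_add]
             rw [char2_add_self]; exact zero_mem _
  | @insert i s hi ih =>
      rw [Finset.prod_insert hi, Finset.prod_insert hi, Finset.card_insert_of_notMem hi]
      have ha' : ∀ j ∈ s, a j ∈ P 1 := fun j hj => ha j (Finset.mem_insert_of_mem hj)
      have hh' : ∀ j ∈ s, h j ∈ P 2 := fun j hj => hh j (Finset.mem_insert_of_mem hj)
      have hR := ih ha' hh'
      set X' := ∏ j ∈ s, (a j + h j) with hX'
      set X := ∏ j ∈ s, a j with hX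
      have hkey : (a i + h i) * X' + a i * X
          = a i * (X' + X) + h i * X' := by ring
      rw [hkey]
      have h1 : a i * (X' + X) ∈ P (s.card + 2) := by
        have := P_mul (ha i (Finset.mem_insert_self i s)) hR
        rwa [show 1 + (s.card + 1) = s.card + 2 by omega] at this
      have h2 : h i * X' ∈ P (s.card + 2) := by
        have hX'mem : X' ∈ P s.card := prod_mem_P s _ fun j hj =>
          add_mem (ha' j hj) (P_le (by omega) (hh' j hj))
        have := P_mul (hh i (Finset.mem_insert_self i s)) hX'mem
        rwa [show 2 + s.card = s.card + 2 by omega] at this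
      exact add_mem h1 h2





variable {ιB : Type*} (b : Module.Basis ιB (ZMod 2) V)

noncomputable def uE (i : ιB) : E := 1 + eι (b i)

lemma uE_sq (i : ιB) : uE b i * uE b i = 1 := by
  rw [uE]
  linear_combination ExteriorAlgebra.ι_sq_zero (R := ZMod 2) (b i)
    + eι (b i) * (e_two_eq_zero (V := V))

lemma pow_val_add (x : E) (hx : x * x = 1) (a c : ZMod 2) :
    x ^ (a + c).val = x ^ a.val * x ^ c.val := by
  rcases zmod2_cases a with rfl | rfl <;> rcases zmod2_cases c with rfl | rfl <;>
    simp [show ((0 : ZMod 2) + 0).val = 0 from rfl, show ((0 : ZMod 2) + 1).val = 1 from rfl,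
      show ((1 : ZMod 2) + 0).val = 1 from rfl, show ((1 : ZMod 2) + 1).val = 0 from rfl,
      show ((0 : ZMod 2)).val = 0 from rfl, show ((1 : ZMod 2)).val = 1 from rfl, hx]

noncomputable def GG (c : ιB →₀ ZMod 2) : E := c.prod fun i a => uE b i ^ a.val

lemma GG_zero : GG b 0 = 1 := Finsupp.prod_zero_index

lemma GG_add (c d : ιB →₀ ZMod 2) : GG b (c + d) = GG b c * GG b d :=
  Finsupp.prod_add_index' (fun i => by simp [show ((0 : ZMod 2)).val = 0 from rfl])
    (fun i a c => pow_val_add _ (uE_sq b i) a c)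

lemma GG_single (i : ιB) : GG b (Finsupp.single i 1) = uE b i := by
  rw [GG, Finsupp.prod_single_index (by simp [show ((0 : ZMod 2)).val = 0 from rfl])]
  simp [show ((1 : ZMod 2)).val = 1 from rfl]

noncomputable def gHom : Multiplicative V →* E where
  toFun v := GG b (b.repr v.toAdd)
  map_one' := by
    show GG b (b.repr 0) = 1
    rw [map_zero, GG_zero]
  map_mul' x y := by
    show GG b (b.repr (x.toAdd + y.toAdd)) = GG b (b.repr x.toAdd) * GG b (b.repr y.toAdd)
    rw [map_add, GG_add]

noncomputable def Theta : GroupAlg V →ₐ[ZMod 2] E :=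
  AddMonoidAlgebra.lift (ZMod 2) E V (gHom b)

lemma Theta_T (v : V) : Theta b (TT v) = GG b (b.repr v) := by
  rw [Theta, TT, AddMonoidAlgebra.lift_single, one_smul]
  rfl

lemma GG_key (c : ιB →₀ ZMod 2) : GG b c + 1 + eι (b.repr.symm c) ∈ P 2 := by
  induction c using Finsupp.induction with
  | zero =>
      rw [GG_zero, map_zero, map_zero, add_zero, char2_add_self]
      exact zero_mem _
  | single_add i r f hif hr IH =>
      have hr1 : r = 1 := (zmod2_cases r).resolve_left hr
      subst hr1
      rw [GG_add, GG_single, map_add, Module.Basis.repr_symm_single_one, map_add]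
      set A := eι (b i) with hA
      set x := b.repr.symm f with hxdef
      set ρ := GG b f + 1 + eι x with hρ
      have hGf : GG b f = 1 + eι x + ρ := by
        rw [hρ]
        linear_combination -(1 + eι x) * (e_two_eq_zero (V := V))
      rw [uE, hGf]
      have hexp : (1 + A) * (1 + eι x + ρ) + 1 + (A + eι x)
          = ρ + A * eι x + A * ρ + (1 + A + eι x) * 2 := by ring
      rw [hexp, e_two_eq_zero (V := V), mul_zero, add_zero]
      refine add_mem (add_mem IH ?_) ?_
      · exact mem_P (le_refl 2) (SetLike.mul_mem_graded (eι_mem_one (b i)) (eι_mem_one x))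
      · exact P_le (by omega) (P_mul (mem_P (le_refl 1) (eι_mem_one (b i))) IH)

lemma Theta_yy_P2 (w : V) : Theta b (yy w) + eι w ∈ P 2 := by
  have hΘ : Theta b (yy w) = GG b (b.repr w) + 1 := by
    rw [yy, map_add, Theta_T, Theta_T, map_zero, GG_zero, add_comm]
  rw [hΘ]
  have h := GG_key b (b.repr w)
  rwa [LinearEquiv.symm_apply_apply] at h

lemma Theta_yy_P1 (w : V) : Theta b (yy w) ∈ P 1 := by
  have h2 := Theta_yy_P2 b w
  have : Theta b (yy w) = (Theta b (yy w) + eι w) + eι w := by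
    linear_combination -eι w * (e_two_eq_zero (V := V))
  rw [this]
  exact add_mem (P_le (by omega) h2) (mem_P (le_refl 1) (eι_mem_one w))

lemma Theta_prodY {m : ℕ} (v : Fin m → V) :
    Theta b (∏ i, yy (v i)) + ∏ i, eι (v i) ∈ P (m + 1) := by
  rw [map_prod]
  have hsplit : ∀ i : Fin m, Theta b (yy (v i)) = eι (v i) + (Theta b (yy (v i)) + eι (v i)) := by
    intro i
    linear_combination -eι (v i) * (e_two_eq_zero (V := V))
  rw [Finset.prod_congr rfl fun i _ => hsplit i]
  have h := prod_add_mem_P Finset.univ (fun i => eι (v i))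
    (fun i => Theta b (yy (v i)) + eι (v i))
    (fun i _ => mem_P (le_refl 1) (eι_mem_one (v i)))
    (fun i _ => Theta_yy_P2 b (v i))
  simpa using h

lemma Theta_pow_mem {m : ℕ} {x : GroupAlg V} (hx : x ∈ augIdeal V ^ m) :
    Theta b x ∈ P m := by
  have hsp : (augIdeal V ^ m : Ideal (GroupAlg V))
      = Submodule.span (GroupAlg V) (Set.range (yy (V := V)) ^ m) := by
    rw [augIdeal_eq_span]
    exact Submodule.span_pow _ m
  rw [hsp] at hx
  induction hx using Submodule.span_induction with
  | mem z hz =>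
      rw [Set.mem_pow] at hz
      obtain ⟨f, hf⟩ := hz
      choose w hw using fun i => (f i).2
      have hz' : z = ∏ i, yy (w i) := by
        rw [← hf, List.prod_ofFn]
        exact Finset.prod_congr rfl fun i _ => (hw i).symm
      rw [hz', map_prod]
      have h := prod_mem_P Finset.univ (fun i => Theta b (yy (w i)))
        (fun i _ => Theta_yy_P1 b (w i))
      simpa using h
  | zero => rw [map_zero]; exact zero_mem _
  | add a c _ _ ha hc => rw [map_add]; exact add_mem ha hc
  | smul r a _ ha =>
      rw [smul_eq_mul, map_mul]
      exact mul_P _ ha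

/-- The degree-`p` projection of `Theta`. -/
noncomputable def Lam (p : ℕ) : GroupAlg V →ₗ[ZMod 2] (⋀[ZMod 2]^p V : Submodule (ZMod 2) E) :=
  ((DFinsupp.lapply p).comp
    (DirectSum.decomposeAlgEquiv
      (fun i => (⋀[ZMod 2]^i V : Submodule (ZMod 2) E))).toLinearMap).comp
    (Theta b).toLinearMap

lemma Lam_apply (p : ℕ) (a : GroupAlg V) :
    (Lam b p a : E)
      = (DirectSum.decompose (fun i => (⋀[ZMod 2]^i V : Submodule (ZMod 2) E)) (Theta b a) p : E) :=
  rfl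

lemma Lam_vanish {p : ℕ} {x : GroupAlg V} (hx : x ∈ augIdeal V ^ (p + 1)) :
    Lam b p x = 0 := by
  have h := Theta_pow_mem b hx
  have hc := P_decompose_eq_zero h (Nat.lt_succ_self p)
  exact Subtype.ext (by rw [Lam_apply]; exact hc)

lemma Lam_prodY {p : ℕ} (v : Fin p → V) :
    (Lam b p (∏ i, yy (v i)) : E) = ExteriorAlgebra.ιMulti (ZMod 2) p v := by
  have hιM : ExteriorAlgebra.ιMulti (ZMod 2) p v = ∏ i, eι (v i) := by
    rw [ExteriorAlgebra.ιMulti_apply, List.prod_ofFn]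
  have hmem : ∏ i, eι (v i) ∈ (⋀[ZMod 2]^p V : Submodule (ZMod 2) E) := by
    rw [← hιM]
    exact ExteriorAlgebra.ιMulti_range (ZMod 2) p ⟨v, rfl⟩
  set R := Theta b (∏ i, yy (v i)) + ∏ i, eι (v i) with hR
  have hRP : R ∈ P (p + 1) := Theta_prodY b v
  have hθ : Theta b (∏ i, yy (v i)) = (∏ i, eι (v i)) + R := by
    rw [hR]
    linear_combination -(∏ i, eι (v i)) * (e_two_eq_zero (V := V))
  rw [Lam_apply, hθ, DirectSum.decompose_add]
  have h1 := DirectSum.decompose_of_mem_same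
    (fun i => (⋀[ZMod 2]^i V : Submodule (ZMod 2) E)) hmem
  have h2 := P_decompose_eq_zero hRP (Nat.lt_succ_self p)
  rw [DirectSum.add_apply, Submodule.coe_add, h1, h2, add_zero, hιM]





lemma prod_mem_augpow {κ : Type*} (s : Finset κ) (f : κ → GroupAlg V)
    (h : ∀ i ∈ s, f i ∈ augIdeal V) : ∏ i ∈ s, f i ∈ augIdeal V ^ s.card := by
  classical
  induction s using Finset.induction_on with
  | empty =>
      rw [Finset.prod_empty, Finset.card_empty, pow_zero, Ideal.one_eq_top]
      trivial
  | @insert a s ha ih =>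
      rw [Finset.prod_insert ha, Finset.card_insert_of_notMem ha, pow_succ']
      exact Ideal.mul_mem_mul (h a (Finset.mem_insert_self a s))
        (ih fun i hi => h i (Finset.mem_insert_of_mem hi))

lemma prod_update {p : ℕ} [DecidableEq (Fin p)] (m : Fin p → V) (i : Fin p) (z : V) :
    ∏ j, yy (Function.update m i z j)
      = yy z * ∏ j ∈ Finset.univ.erase i, yy (m j) := by
  rw [← Finset.mul_prod_erase Finset.univ _ (Finset.mem_univ i), Function.update_self]
  congr 1
  refine Finset.prod_congr rfl fun j hj => ?_
  rw [Function.update_of_ne (Finset.mem_erase.mp hj).1]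

lemma prod_erase_mem {p : ℕ} [DecidableEq (Fin p)] (m : Fin p → V) (i : Fin p) :
    ∏ j ∈ Finset.univ.erase i, yy (m j) ∈ augIdeal V ^ (p - 1) := by
  have h := prod_mem_augpow (Finset.univ.erase i) (fun j => yy (m j))
    (fun j _ => yy_mem (m j))
  rwa [Finset.card_erase_of_mem (Finset.mem_univ i), Finset.card_univ, Fintype.card_fin] at h

variable (p : ℕ)

/-- `I_{p+1}` as a `𝔽₂`-submodule. -/
noncomputable abbrev Jmod : Submodule (ZMod 2) (GroupAlg V) :=
  Submodule.restrictScalars (ZMod 2) (augIdeal V ^ (p + 1) : Ideal (GroupAlg V))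

/-- The image of `I_p` in the quotient. -/
noncomputable abbrev Nmod : Submodule (ZMod 2) (GroupAlg V ⧸ Jmod (V := V) p) :=
  (Submodule.restrictScalars (ZMod 2) (augIdeal V ^ p : Ideal (GroupAlg V))).map
    (Jmod (V := V) p).mkQ

variable {p}

lemma mkQ_eq_of_sub_mem {a b : GroupAlg V} (h : a - b ∈ augIdeal V ^ (p + 1)) :
    (Jmod (V := V) p).mkQ a = (Jmod (V := V) p).mkQ b := by
  rw [Submodule.mkQ_apply, Submodule.mkQ_apply, Submodule.Quotient.eq]
  simpa using h

variable (p)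

/-- The alternating map `v ↦ y_{v 1} ⋯ y_{v p} mod I_{p+1}`. -/
noncomputable def Phialt : V [⋀^Fin p]→ₗ[ZMod 2] (GroupAlg V ⧸ Jmod (V := V) p) where
  toFun v := (Jmod (V := V) p).mkQ (∏ i, yy (v i))
  map_update_add' := by
    intro _ m i x y
    have hp : 0 < p := i.pos
    rw [prod_update, prod_update, prod_update, ← map_add]
    set r := ∏ j ∈ Finset.univ.erase i, yy (m j) with hr
    refine mkQ_eq_of_sub_mem ?_
    have hdiff : yy (x + y) * r - (yy x * r + yy y * r) = yy x * yy y * r := by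
      rw [yy_add]; ring
    rw [hdiff]
    have h2 : yy x * yy y ∈ augIdeal V ^ 2 := by
      rw [sq]; exact Ideal.mul_mem_mul (yy_mem x) (yy_mem y)
    have hmul := Ideal.mul_mem_mul h2 (prod_erase_mem m i)
    rwa [← pow_add, show 2 + (p - 1) = p + 1 by omega] at hmul
  map_update_smul' := by
    intro _ m i c x
    rcases zmod2_cases c with rfl | rfl
    · rw [zero_smul, zero_smul]
      have : ∏ j, yy (Function.update m i (0 : V) j) = 0 :=
        Finset.prod_eq_zero (Finset.mem_univ i)
          (by rw [Function.update_self, yy_zero])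
      rw [this, map_zero]
    · rw [one_smul, one_smul]
  map_eq_zero_of_eq' := by
    intro v i j hveq hne
    have hzero : ∏ k, yy (v k) = 0 := by
      classical
      rw [← Finset.mul_prod_erase Finset.univ _ (Finset.mem_univ i),
        ← Finset.mul_prod_erase _ _
          (Finset.mem_erase.mpr ⟨Ne.symm hne, Finset.mem_univ j⟩),
        ← mul_assoc, hveq, yy_sq, zero_mul]
    show (Jmod (V := V) p).mkQ (∏ k, yy (v k)) = 0
    rw [hzero, map_zero]

lemma Phialt_apply (v : Fin p → V) :
    Phialt (V := V) p v = (Jmod (V := V) p).mkQ (∏ i, yy (v i)) := rfl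

/-- Lift to a linear map on the exterior algebra. -/
noncomputable def Phi0 : E →ₗ[ZMod 2] GroupAlg V ⧸ Jmod (V := V) p :=
  ExteriorAlgebra.liftAlternating
    (Function.update (fun _ => 0) p (Phialt (V := V) p))

lemma Phi0_ιMulti (v : Fin p → V) :
    Phi0 (V := V) p (ExteriorAlgebra.ιMulti (ZMod 2) p v)
      = (Jmod (V := V) p).mkQ (∏ i, yy (v i)) := by
  rw [Phi0, ExteriorAlgebra.liftAlternating_apply_ιMulti, Function.update_self, Phialt_apply]

lemma mkQ_mul (r : GroupAlg V) {a : GroupAlg V} (ha : a ∈ augIdeal V ^ p) :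
    (Jmod (V := V) p).mkQ (r * a) = epsA r • (Jmod (V := V) p).mkQ a := by
  have h1 : r - algebraMap (ZMod 2) (GroupAlg V) (epsA r) ∈ augIdeal V := by
    rw [augIdeal_eq_ker, RingHom.mem_ker, map_sub, AlgHom.commutes]
    simp
  have hmem : r * a - epsA r • a ∈ augIdeal V ^ (p + 1) := by
    have heq : r * a - epsA r • a
        = (r - algebraMap (ZMod 2) (GroupAlg V) (epsA r)) * a := by
      rw [sub_mul, Algebra.smul_def]
    rw [heq, pow_succ']
    exact Ideal.mul_mem_mul h1 ha
  rw [mkQ_eq_of_sub_mem hmem, map_smul]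

lemma prodY_mem_pow (v : Fin p → V) : ∏ i, yy (v i) ∈ augIdeal V ^ p := by
  have h := prod_mem_augpow Finset.univ (fun i => yy (v i)) (fun i _ => yy_mem (v i))
  rwa [Finset.card_univ, Fintype.card_fin] at h

lemma Phi0_mem_N {x : E} (hx : x ∈ (⋀[ZMod 2]^p V : Submodule (ZMod 2) E)) :
    Phi0 (V := V) p x ∈ Nmod (V := V) p := by
  rw [← ExteriorAlgebra.ιMulti_span_fixedDegree] at hx
  induction hx using Submodule.span_induction with
  | mem z hz =>
      obtain ⟨v, rfl⟩ := hz
      rw [Phi0_ιMulti]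
      exact Submodule.mem_map_of_mem (by simpa using prodY_mem_pow p v)
  | zero => rw [map_zero]; exact zero_mem _
  | add a c _ _ ha hc => rw [map_add]; exact add_mem ha hc
  | smul c z _ hz => rw [map_smul]; exact Submodule.smul_mem _ _ hz

lemma exists_preimage {z : GroupAlg V ⧸ Jmod (V := V) p} (hz : z ∈ Nmod (V := V) p) :
    ∃ x : E, x ∈ (⋀[ZMod 2]^p V : Submodule (ZMod 2) E) ∧ Phi0 (V := V) p x = z := by
  obtain ⟨a, ha, rfl⟩ := hz
  have ha' : a ∈ (augIdeal V ^ p : Ideal (GroupAlg V)) := ha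
  have hsp : (augIdeal V ^ p : Ideal (GroupAlg V))
      = Submodule.span (GroupAlg V) (Set.range (yy (V := V)) ^ p) := by
    rw [augIdeal_eq_span]
    exact Submodule.span_pow _ p
  rw [hsp] at ha'
  clear ha
  induction ha' using Submodule.span_induction with
  | mem u hu =>
      rw [Set.mem_pow] at hu
      obtain ⟨f, hf⟩ := hu
      choose w hw using fun i => (f i).2
      have hu' : u = ∏ i, yy (w i) := by
        rw [← hf, List.prod_ofFn]
        exact Finset.prod_congr rfl fun i _ => (hw i).symm
      refine ⟨ExteriorAlgebra.ιMulti (ZMod 2) p w,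
        ExteriorAlgebra.ιMulti_range (ZMod 2) p ⟨w, rfl⟩, ?_⟩
      rw [Phi0_ιMulti, hu']
  | zero => exact ⟨0, zero_mem _, by rw [map_zero, map_zero]⟩
  | add a c haS hcS iha ihc =>
      obtain ⟨x, hx, hx'⟩ := iha
      obtain ⟨y, hy, hy'⟩ := ihc
      exact ⟨x + y, add_mem hx hy, by rw [map_add, map_add, hx', hy']⟩
  | smul r a haS ih =>
      obtain ⟨x, hx, hx'⟩ := ih
      refine ⟨epsA r • x, Submodule.smul_mem _ _ hx, ?_⟩
      have haP : a ∈ augIdeal V ^ p := by rw [hsp]; exact haS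
      rw [map_smul, hx', smul_eq_mul, mkQ_mul p r haP]


noncomputable def Psi0 : (GroupAlg V ⧸ Jmod (V := V) p) →ₗ[ZMod 2]
    (⋀[ZMod 2]^p V : Submodule (ZMod 2) E) :=
  Submodule.liftQ _ (Lam b p) (fun x hx => by
    rw [LinearMap.mem_ker]
    exact Lam_vanish b (by simpa using hx))

lemma Psi0_Phi0 {x : E} (hx : x ∈ (⋀[ZMod 2]^p V : Submodule (ZMod 2) E)) :
    ((Psi0 b p (Phi0 (V := V) p x) : E)) = x := by
  rw [← ExteriorAlgebra.ιMulti_span_fixedDegree] at hx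
  induction hx using Submodule.span_induction with
  | mem z hz =>
      obtain ⟨v, rfl⟩ := hz
      rw [Phi0_ιMulti, Psi0, Submodule.mkQ_apply, Submodule.liftQ_apply]
      exact Lam_prodY b v
  | zero => rw [map_zero, map_zero]; rfl
  | add a c _ _ ha hc =>
      rw [map_add, map_add, Submodule.coe_add, ha, hc]
  | smul c z _ hz =>
      rw [map_smul, map_smul, Submodule.coe_smul, hz]




lemma prod_TT {κ : Type*} (s : Finset κ) (w : κ → V) :
    ∏ i ∈ s, TT (w i) = TT (∑ i ∈ s, w i) := by
  classical
  induction s using Finset.induction_on with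
  | empty => rw [Finset.prod_empty, Finset.sum_empty, T_zero]
  | @insert a s ha ih =>
      rw [Finset.prod_insert ha, Finset.sum_insert ha, ih, T_mul]

lemma prodY_eq_gamma [Fintype V] {p : ℕ} (v : Fin p → V)
    (hv : LinearIndependent (ZMod 2) v) :
    ∏ i, yy (v i) = gammaSet (Submodule.span (ZMod 2) (Set.range v) : Set V) := by
  classical
  have hstep : ∀ i : Fin p, yy (v i) = TT (v i) + TT 0 := fun i => by rw [yy, add_comm]
  rw [Finset.prod_congr rfl fun i _ => hstep i, Finset.prod_add]
  have hterm : ∀ t ∈ Finset.univ.powerset,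
      (∏ i ∈ t, TT (v i)) * (∏ i ∈ Finset.univ \ t, TT (0 : V))
        = TT (∑ i ∈ t, v i) := by
    intro t _
    rw [prod_TT, prod_TT, T_mul, Finset.sum_const, smul_zero, add_zero]
  rw [Finset.sum_congr rfl hterm, gammaSet]
  have hkey : ∀ t : Finset (Fin p),
      ∑ i ∈ t, v i = ∑ i, (if i ∈ t then (1 : ZMod 2) else 0) • v i := by
    intro t
    rw [eq_comm]
    calc ∑ i, (if i ∈ t then (1 : ZMod 2) else 0) • v i
        = ∑ i, (if i ∈ t then v i else 0) := by
          refine Finset.sum_congr rfl fun i _ => ?_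
          split <;> simp
      _ = ∑ i ∈ Finset.univ ∩ t, v i := Finset.sum_ite_mem _ _ _
      _ = ∑ i ∈ t, v i := by rw [Finset.univ_inter]
  refine Finset.sum_bij (fun t _ => ∑ i ∈ t, v i) ?_ ?_ ?_ ?_
  · intro t _
    rw [Set.Finite.mem_toFinset]
    exact Submodule.sum_mem _ fun i _ => Submodule.subset_span ⟨i, rfl⟩
  · intro t₁ h₁ t₂ h₂ heq
    have hz : ∑ i, ((if i ∈ t₁ then (1 : ZMod 2) else 0)
        - (if i ∈ t₂ then (1 : ZMod 2) else 0)) • v i = 0 := by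
      simp only [sub_smul]
      rw [Finset.sum_sub_distrib, ← hkey, ← hkey, heq, sub_self]
    have hcoef := Fintype.linearIndependent_iff.mp hv _ hz
    ext i
    have hi := hcoef i
    by_cases h1 : i ∈ t₁ <;> by_cases h2 : i ∈ t₂ <;>
      simp [h1, h2] at hi ⊢
  · intro w hw
    rw [Set.Finite.mem_toFinset] at hw
    obtain ⟨c, hc⟩ := (Submodule.mem_span_range_iff_exists_fun (ZMod 2)).mp hw
    refine ⟨Finset.univ.filter (fun i => c i = 1), Finset.mem_powerset.mpr
      (Finset.subset_univ _), ?_⟩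
    show ∑ i ∈ Finset.univ.filter (fun i => c i = 1), v i = w
    rw [← hc, Finset.sum_filter]
    refine Finset.sum_congr rfl fun i _ => ?_
    rcases zmod2_cases (c i) with h | h <;> rw [h] <;> simp
  · intro t _
    rfl

end QGR

/-- There is an `𝔽₂`-linear isomorphism `⋀^p V ≅ I_p(V)/I_{p+1}(V)` sending
`v₁ ∧ … ∧ v_p` to the class of `γ_{span{v₁,…,v_p}}` for every linearly independent
tuple `v₁, …, v_p`.  The quotient `I_p(V)/I_{p+1}(V)` is realised as the image of
`I_p(V)` in `𝔽₂[V]/I_{p+1}(V)`. -/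
theorem exterior_power_iso_quillen_graded
    (p : ℕ)
    (V : Type*) [AddCommGroup V] [Module (ZMod 2) V] [Fintype V] :
    ∃ φ : (⋀[ZMod 2]^p V) ≃ₗ[ZMod 2]
        ((Submodule.restrictScalars (ZMod 2) (augIdeal V ^ p : Ideal (GroupAlg V))).map
          (Submodule.restrictScalars (ZMod 2)
            (augIdeal V ^ (p + 1) : Ideal (GroupAlg V))).mkQ),
      ∀ (v : Fin p → V), LinearIndependent (ZMod 2) v →
        ∀ h : ExteriorAlgebra.ιMulti (ZMod 2) p v ∈ ⋀[ZMod 2]^p V,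
          (φ ⟨ExteriorAlgebra.ιMulti (ZMod 2) p v, h⟩ :
              GroupAlg V ⧸ Submodule.restrictScalars (ZMod 2)
                (augIdeal V ^ (p + 1) : Ideal (GroupAlg V))) =
            (Submodule.restrictScalars (ZMod 2)
                (augIdeal V ^ (p + 1) : Ideal (GroupAlg V))).mkQ
              (gammaSet (Submodule.span (ZMod 2) (Set.range v) : Set V)) := by
  classical
  let b : Module.Basis (Module.Basis.ofVectorSpaceIndex (ZMod 2) V) (ZMod 2) V :=
    Module.Basis.ofVectorSpace (ZMod 2) V
  let φmap : (⋀[ZMod 2]^p V) →ₗ[ZMod 2] QGR.Nmod (V := V) p :=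
    LinearMap.codRestrict _ ((QGR.Phi0 (V := V) p).comp (Submodule.subtype _))
      (fun x => QGR.Phi0_mem_N p x.2)
  have hinj : Function.Injective φmap := by
    intro x y hxy
    have h1 : QGR.Phi0 (V := V) p x.1 = QGR.Phi0 (V := V) p y.1 :=
      congrArg Subtype.val hxy
    have h2 := QGR.Psi0_Phi0 b p x.2
    have h3 := QGR.Psi0_Phi0 b p y.2
    apply Subtype.ext
    rw [← h2, ← h3, h1]
  have hsurj : Function.Surjective φmap := by
    rintro ⟨z, hz⟩
    obtain ⟨x, hx, hx'⟩ := QGR.exists_preimage p hz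
    exact ⟨⟨x, hx⟩, Subtype.ext hx'⟩
  refine ⟨LinearEquiv.ofBijective φmap ⟨hinj, hsurj⟩, ?_⟩
  intro v hv h
  have heq : ((LinearEquiv.ofBijective φmap ⟨hinj, hsurj⟩)
        ⟨ExteriorAlgebra.ιMulti (ZMod 2) p v, h⟩ :
      GroupAlg V ⧸ Submodule.restrictScalars (ZMod 2)
        (augIdeal V ^ (p + 1) : Ideal (GroupAlg V)))
      = QGR.Phi0 (V := V) p (ExteriorAlgebra.ιMulti (ZMod 2) p v) := rfl
  rw [heq, QGR.Phi0_ιMulti, QGR.prodY_eq_gamma v hv]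
end

section
/- Let V = (ℤ/2ℤ)² and let I be the augmentation ideal of the integral group algebra ℤ[V]. Then the powers of I form a strictly decreasing chain: I^{p+1} ⊊ I^p for every p ≥ 0. In particular, the Quillen filtration of the integral group algebra of (ℤ/2ℤ)² never stabilises. -/
/-- The augmentation ideal of the integral group algebra `ℤ[A]`: the kernel of the
ring homomorphism `ℤ[A] → ℤ` sending every basis element `T_a` to `1`. -/
noncomputable def intAugIdeal (A : Type*) [AddCommGroup A] :
    Ideal (AddMonoidAlgebra ℤ A) :=
  RingHom.ker (AddMonoidAlgebra.lift ℤ ℤ A 1)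

/-- The augmentation map of `ℤ[(ℤ/2ℤ)²]`. -/
noncomputable def augV : AddMonoidAlgebra ℤ (ZMod 2 × ZMod 2) →ₐ[ℤ] ℤ :=
  AddMonoidAlgebra.lift ℤ ℤ (ZMod 2 × ZMod 2) 1

lemma mem_intAugIdeal_iff (x : AddMonoidAlgebra ℤ (ZMod 2 × ZMod 2)) :
    x ∈ intAugIdeal (ZMod 2 × ZMod 2) ↔ augV x = 0 := Iff.rfl

lemma augV_single (a : ZMod 2 × ZMod 2) (b : ℤ) :
    augV (AddMonoidAlgebra.single a b) = b := by
  show (AddMonoidAlgebra.lift ℤ ℤ (ZMod 2 × ZMod 2) 1) (AddMonoidAlgebra.single a b) = b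
  rw [AddMonoidAlgebra.lift_single]
  simp

/-- The character `(a, b) ↦ (-1)^a` of `(ℤ/2ℤ)²`, as a monoid hom to `ℤ`. -/
def chiHom : Multiplicative (ZMod 2 × ZMod 2) →* ℤ where
  toFun g := (-1 : ℤ) ^ (Multiplicative.toAdd g).1.val
  map_one' := by decide
  map_mul' := by decide

/-- The ring hom `ℤ[V] → ℤ` induced by `chiHom`. -/
noncomputable def chiRing : AddMonoidAlgebra ℤ (ZMod 2 × ZMod 2) →+* ℤ :=
  (AddMonoidAlgebra.lift ℤ ℤ (ZMod 2 × ZMod 2) chiHom).toRingHom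

lemma chiRing_single (a : ZMod 2 × ZMod 2) (b : ℤ) :
    chiRing (AddMonoidAlgebra.single a b) = b * (-1 : ℤ) ^ a.1.val := by
  show (AddMonoidAlgebra.lift ℤ ℤ (ZMod 2 × ZMod 2) chiHom) (AddMonoidAlgebra.single a b)
      = b * (-1 : ℤ) ^ a.1.val
  rw [AddMonoidAlgebra.lift_single]
  rfl

lemma chi_mem_aug_dvd {x : AddMonoidAlgebra ℤ (ZMod 2 × ZMod 2)}
    (hx : x ∈ intAugIdeal (ZMod 2 × ZMod 2)) : (2 : ℤ) ∣ chiRing x := by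
  have key : (Int.castRingHom (ZMod 2)).comp chiRing
      = (Int.castRingHom (ZMod 2)).comp augV.toRingHom := by
    apply AddMonoidAlgebra.ringHom_ext
    · intro b
      show (Int.castRingHom (ZMod 2)) (chiRing (AddMonoidAlgebra.single 0 b))
        = (Int.castRingHom (ZMod 2)) (augV (AddMonoidAlgebra.single 0 b))
      rw [chiRing_single, augV_single]
      simp
    · intro a
      show (Int.castRingHom (ZMod 2)) (chiRing (AddMonoidAlgebra.single a 1))
        = (Int.castRingHom (ZMod 2)) (augV (AddMonoidAlgebra.single a 1))
      rw [chiRing_single, augV_single, one_mul, map_pow, map_neg, map_one]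
      have h1 : (-1 : ZMod 2) = 1 := by decide
      rw [h1, one_pow]
  have h0 : augV x = 0 := (mem_intAugIdeal_iff x).mp hx
  have heq : (Int.castRingHom (ZMod 2)) (chiRing x)
      = (Int.castRingHom (ZMod 2)) (augV x) := DFunLike.congr_fun key x
  rw [h0, map_zero] at heq
  have h2 : ((chiRing x : ℤ) : ZMod 2) = 0 := by simpa using heq
  have := (ZMod.intCast_zmod_eq_zero_iff_dvd (chiRing x) 2).mp h2
  exact_mod_cast this

lemma chi_pow_dvd {p : ℕ} {x : AddMonoidAlgebra ℤ (ZMod 2 × ZMod 2)}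
    (hx : x ∈ intAugIdeal (ZMod 2 × ZMod 2) ^ p) : (2 : ℤ) ^ p ∣ chiRing x := by
  have h1 : Ideal.map chiRing (intAugIdeal (ZMod 2 × ZMod 2)) ≤ Ideal.span {(2 : ℤ)} := by
    rw [Ideal.map_le_iff_le_comap]
    intro y hy
    exact Ideal.mem_span_singleton.mpr (chi_mem_aug_dvd hy)
  have h2 : chiRing x ∈ Ideal.map chiRing (intAugIdeal (ZMod 2 × ZMod 2) ^ p) :=
    Ideal.mem_map_of_mem _ hx
  rw [Ideal.map_pow] at h2
  have h3 := (Ideal.pow_right_mono h1 p) h2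
  rw [Ideal.span_singleton_pow, Ideal.mem_span_singleton] at h3
  exact h3

/-- For `V = (ℤ/2ℤ)²`, the powers of the augmentation ideal `I` of `ℤ[V]` form a
strictly decreasing chain `I^{p+1} ⊊ I^p` for every `p ≥ 0`; in particular the
Quillen filtration of the integral group algebra never stabilises. -/
theorem int_quillen_filtration_never_stabilises (p : ℕ) :
    intAugIdeal (ZMod 2 × ZMod 2) ^ (p + 1) < intAugIdeal (ZMod 2 × ZMod 2) ^ p := by
  set u : AddMonoidAlgebra ℤ (ZMod 2 × ZMod 2) :=
    AddMonoidAlgebra.single ((1 : ZMod 2), (0 : ZMod 2)) 1 - 1 with hu_def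
  have hu : u ∈ intAugIdeal (ZMod 2 × ZMod 2) := by
    rw [mem_intAugIdeal_iff, hu_def, map_sub, map_one, augV_single, sub_self]
  have hfu : chiRing u = -2 := by
    rw [hu_def, map_sub, map_one, chiRing_single]
    norm_num [ZMod.val_one]
  refine lt_of_le_of_ne (Ideal.pow_le_pow_right (Nat.le_succ p)) ?_
  intro heq
  have hmem : u ^ p ∈ intAugIdeal (ZMod 2 × ZMod 2) ^ (p + 1) := by
    rw [heq]; exact Ideal.pow_mem_pow hu p
  have hdvd : (2 : ℤ) ^ (p + 1) ∣ chiRing (u ^ p) := chi_pow_dvd hmem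
  rw [map_pow, hfu] at hdvd
  have h2 : (2 : ℤ) ^ (p + 1) ∣ (2 : ℤ) ^ p := by
    have hh : ((-2 : ℤ)) ^ p = (-1) ^ p * 2 ^ p := by rw [neg_pow]
    rw [hh] at hdvd
    rcases Nat.even_or_odd p with h | h
    · rwa [h.neg_one_pow, one_mul] at hdvd
    · rw [h.neg_one_pow, neg_one_mul, dvd_neg] at hdvd; exact hdvd
  have hle := Int.le_of_dvd (by positivity) h2
  have h3 : (2 : ℤ) ^ p < 2 ^ (p + 1) := by
    apply pow_lt_pow_right₀ (by norm_num) (Nat.lt_succ_self p)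
  omega
end

section
/- Let E be a finite set, let p ≥ 1, and let d₁, …, d_p ∈ (ℤ/2ℤ)^E have pairwise disjoint supports. Let v ∈ (ℤ/2ℤ)^E and let e₁, …, e_q ∈ E be any elements (not necessarily distinct) with 0 ≤ q ≤ p − 1. Then Σ_{S ⊆ {1,…,p}} (−1)^{|S|} · Π_{i=1}^{q} h_{e_i}(v + Σ_{j ∈ S} d_j) = 0 in ℤ. (That is, a signed chain over a p-dimensional affine coordinate subspace is annihilated by every product of fewer than p Heaviside functions, so it lies in the p-th piece of the dual Varchenko–Gelfand degree filtration.) -/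
open Finset

/-- The Heaviside value: `h_e(u) = 1` if `u(e) = 0` and `h_e(u) = 0` if `u(e) = 1`. -/
def heaviside {E : Type*} (e : E) (u : E → ZMod 2) : ℤ :=
  if u e = 0 then 1 else 0

/-- A signed chain over a `p`-dimensional affine coordinate subspace is annihilated by
any product of fewer than `p` Heaviside functions: if `d₁, …, d_p ∈ (ℤ/2ℤ)^E` have
pairwise disjoint supports, `v ∈ (ℤ/2ℤ)^E`, and `e₁, …, e_q ∈ E` with `q ≤ p − 1`, then
`Σ_{S ⊆ {1,…,p}} (−1)^{|S|} Π_{i=1}^{q} h_{e_i}(v + Σ_{j ∈ S} d_j) = 0`. -/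
theorem signed_coordinate_chain_annihilated
    (E : Type*) [Fintype E] (p : ℕ) (hp : 1 ≤ p)
    (d : Fin p → (E → ZMod 2))
    (hdisj : ∀ i j : Fin p, i ≠ j → ∀ e : E, d i e = 1 → d j e ≠ 1)
    (v : E → ZMod 2) (q : ℕ) (hq : q < p) (e : Fin q → E) :
    ∑ S : Finset (Fin p), (-1 : ℤ) ^ S.card *
        ∏ i : Fin q, heaviside (e i) (v + ∑ j ∈ S, d j) = 0 := by
  classical
  -- the set of indices j whose support touches some e i
  set T : Finset (Fin p) :=
    (univ : Finset (Fin q)).biUnion (fun i => univ.filter (fun j => d j (e i) = 1)) with hT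
  have hTcard : T.card ≤ q := by
    calc T.card ≤ ∑ i : Fin q, (univ.filter (fun j => d j (e i) = 1)).card :=
          Finset.card_biUnion_le
      _ ≤ ∑ _i : Fin q, 1 := by
          apply Finset.sum_le_sum
          intro i _
          apply Finset.card_le_one.mpr
          intro a ha b hb
          simp only [mem_filter] at ha hb
          by_contra hne
          exact hdisj a b hne (e i) ha.2 hb.2
      _ = q := by simp
  have hex : ∃ k : Fin p, k ∉ T := by
    by_contra h
    push_neg at h
    have : T = univ := Finset.eq_univ_iff_forall.mpr h
    rw [this] at hTcard
    simp at hTcard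
    omega
  obtain ⟨k, hk⟩ := hex
  have hk0 : ∀ i : Fin q, d k (e i) = 0 := by
    intro i
    have hne : d k (e i) ≠ 1 := by
      intro h1
      exact hk (Finset.mem_biUnion.mpr ⟨i, mem_univ i, by simp [h1]⟩)
    revert hne
    have : ∀ x : ZMod 2, x ≠ 1 → x = 0 := by decide
    exact this _
  refine Finset.sum_ninvolution (fun S => if k ∈ S then S.erase k else insert k S)
    ?_ ?_ (fun S => mem_univ _) ?_
  · intro S
    have hprod : ∀ S' : Finset (Fin p),
        (∏ i : Fin q, heaviside (e i) (v + ∑ j ∈ (if k ∈ S' then S'.erase k else insert k S'), d j))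
        = ∏ i : Fin q, heaviside (e i) (v + ∑ j ∈ S', d j) := by
      intro S'
      apply Finset.prod_congr rfl
      intro i _
      unfold heaviside
      congr 1
      simp only [Pi.add_apply, Finset.sum_apply]
      congr 1
      by_cases hkS : k ∈ S'
      · simp only [hkS, if_true]
        rw [← Finset.sum_erase_add S' _ hkS, hk0 i, add_zero]
      · simp only [hkS, if_false]
        rw [Finset.sum_insert hkS, hk0 i, zero_add]
    rw [hprod S]
    by_cases hkS : k ∈ S
    · simp only [hkS, if_true, Finset.card_erase_of_mem hkS]
      have h1 : 1 ≤ S.card := Finset.card_pos.mpr ⟨k, hkS⟩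
      have : (-1 : ℤ) ^ S.card + (-1 : ℤ) ^ (S.card - 1) = 0 := by
        obtain ⟨m, hm⟩ : ∃ m, S.card = m + 1 := ⟨S.card - 1, by omega⟩
        rw [hm, Nat.add_sub_cancel, pow_succ]
        ring
      linear_combination (∏ i : Fin q, heaviside (e i) (v + ∑ j ∈ S, d j)) * this
    · simp only [hkS, if_false, Finset.card_insert_of_notMem hkS]
      have : (-1 : ℤ) ^ S.card + (-1 : ℤ) ^ (S.card + 1) = 0 := by
        rw [pow_succ]; ring
      linear_combination (∏ i : Fin q, heaviside (e i) (v + ∑ j ∈ S, d j)) * this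
  · intro S hne
    by_cases hkS : k ∈ S
    · simp only [hkS, if_true]
      intro h
      exact Finset.notMem_erase k S (by rw [h]; exact hkS)
    · simp only [hkS, if_false]
      intro h
      exact hkS (h ▸ Finset.mem_insert_self k S)
  · intro S
    by_cases hkS : k ∈ S
    · simp [hkS, Finset.insert_erase hkS]
    · simp [hkS, Finset.erase_insert hkS]
end

section
/- Let E be a finite set, let p ≥ 1, and let d₁, …, d_p ∈ (ℤ/2ℤ)^E have pairwise disjoint supports. Let v ∈ (ℤ/2ℤ)^E and suppose i₁, …, i_p ∈ E satisfy d_j(i_j) = 1 for each j. Then Σ_{S ⊆ {1,…,p}} (−1)^{|S|} · Π_{j=1}^{p} h_{i_j}(v + Σ_{k ∈ S} d_k) = Π_{j=1}^{p} (−1)^{v(i_j)} in ℤ. -/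
open Finset

lemma zmod2_step (x : ZMod 2) :
    (if x = 0 then (1:ℤ) else 0) - (if x + 1 = 0 then 1 else 0) = (-1 : ℤ) ^ x.val := by
  revert x; decide

/-- If `d₁, …, d_p ∈ (ℤ/2ℤ)^E` have pairwise disjoint supports, `v ∈ (ℤ/2ℤ)^E`, and
`i₁, …, i_p ∈ E` satisfy `d_j(i_j) = 1` for each `j`, then
`Σ_{S ⊆ {1,…,p}} (−1)^{|S|} Π_{j=1}^{p} h_{i_j}(v + Σ_{k ∈ S} d_k) = Π_{j=1}^{p} (−1)^{v(i_j)}`. -/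
theorem signed_coordinate_chain_evaluation
    (E : Type*) [Fintype E] (p : ℕ) (hp : 1 ≤ p)
    (d : Fin p → (E → ZMod 2))
    (hdisj : ∀ j k : Fin p, j ≠ k → ∀ e : E, d j e = 1 → d k e ≠ 1)
    (v : E → ZMod 2) (i : Fin p → E) (hi : ∀ j : Fin p, d j (i j) = 1) :
    ∑ S : Finset (Fin p), (-1 : ℤ) ^ S.card *
        ∏ j : Fin p, heaviside (i j) (v + ∑ k ∈ S, d k) =
      ∏ j : Fin p, (-1 : ℤ) ^ (v (i j)).val := by
  -- the value of each heaviside factor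
  set H : Fin p → ZMod 2 → ℤ := fun j b => if v (i j) + b = 0 then 1 else 0 with hH
  have key : ∀ (S : Finset (Fin p)) (j : Fin p),
      heaviside (i j) (v + ∑ k ∈ S, d k) = if j ∈ S then H j 1 else H j 0 := by
    intro S j
    have hco : (∑ k ∈ S, d k) (i j) = if j ∈ S then 1 else 0 := by
      have : (∑ k ∈ S, d k) (i j) = ∑ k ∈ S, d k (i j) := by
        simp [Finset.sum_apply]
      rw [this]
      have : ∀ k ∈ S, d k (i j) = if k = j then 1 else 0 := by
        intro k _
        by_cases hk : k = j
        · simp [hk, hi j]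
        · have := hdisj j k (fun h => hk h.symm) (i j) (hi j)
          have h2 : d k (i j) = 0 ∨ d k (i j) = 1 := by
            revert this; generalize d k (i j) = x; revert x; decide
          simp [hk]
          tauto
      rw [Finset.sum_congr rfl this, Finset.sum_ite_eq' S j (fun _ => (1 : ZMod 2))]
    unfold heaviside
    simp only [Pi.add_apply, hco, hH]
    by_cases hj : j ∈ S <;> simp [hj, add_comm]
  have step1 : ∀ S : Finset (Fin p),
      (-1 : ℤ) ^ S.card * ∏ j : Fin p, heaviside (i j) (v + ∑ k ∈ S, d k)
      = (∏ j ∈ S, -(H j 1)) * ∏ j ∈ Sᶜ, H j 0 := by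
    intro S
    have : ∏ j : Fin p, heaviside (i j) (v + ∑ k ∈ S, d k)
        = (∏ j ∈ S, H j 1) * ∏ j ∈ Sᶜ, H j 0 := by
      rw [Finset.prod_congr rfl (fun j _ => key S j)]
      rw [← Finset.prod_mul_prod_compl S]
      congr 1
      · exact Finset.prod_congr rfl (fun j hj => by simp [hj])
      · refine Finset.prod_congr rfl (fun j hj => ?_)
        simp only [Finset.mem_compl] at hj
        simp [hj]
    rw [this]
    have hn : ∏ j ∈ S, -(H j 1) = (-1 : ℤ) ^ S.card * ∏ j ∈ S, H j 1 := by
      have : ∀ j ∈ S, -(H j 1) = (-1 : ℤ) * H j 1 := fun j _ => by ring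
      rw [Finset.prod_congr rfl this, Finset.prod_mul_distrib, Finset.prod_const]
    rw [hn, mul_assoc]
  rw [Finset.sum_congr rfl (fun S _ => step1 S)]
  have : ∀ S : Finset (Fin p), (∏ j ∈ S, -(H j 1)) * ∏ j ∈ Sᶜ, H j 0
      = (∏ j ∈ S, -(H j 1)) * ∏ j ∈ Finset.univ \ S, H j 0 := by
    intro S; rw [Finset.compl_eq_univ_sdiff]
  rw [Finset.sum_congr rfl (fun S _ => this S)]
  rw [← Finset.powerset_univ, ← Finset.prod_add]
  refine Finset.prod_congr rfl (fun j _ => ?_)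
  have := zmod2_step (v (i j))
  simp only [hH, add_zero]
  linarith [zmod2_step (v (i j))]
end

section
/- Let M be a loopless matroid on a linearly ordered finite ground set E. Let S = {i₁, …, i_p} be an NBC-set of M with i₁ > i₂ > … > i_p, and set F_k = cl({i₁, …, i_k}) for 0 ≤ k ≤ p (so F₀ = cl(∅) = ∅ since M is loopless). Then for every NBC-set S' of M with |S'| = p and S' ≠ S, there exists k with 1 ≤ k ≤ p such that S' ∩ (F_k ∖ F_{k−1}) = ∅. -/
open Finset Set

/-- A circuit of a matroid: a minimal dependent set, i.e. a dependent set all of whose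
one-element deletions are independent. -/
def MatroidCircuit {α : Type*} (M : Matroid α) (C : Set α) : Prop :=
  M.Dep C ∧ ∀ x ∈ C, M.Indep (C \ {x})

/-- A broken circuit: a circuit with its minimum element removed
(with respect to a linear order on the ground type). -/
def BrokenCircuit {α : Type*} [LinearOrder α] (M : Matroid α) (B : Set α) : Prop :=
  ∃ (C : Set α) (m : α), MatroidCircuit M C ∧ m ∈ C ∧ (∀ x ∈ C, m ≤ x) ∧ B = C \ {m}

/-- An NBC-set: a subset of the ground set containing no broken circuit. -/
def IsNBC {α : Type*} [LinearOrder α] (M : Matroid α) (S : Set α) : Prop :=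
  S ⊆ M.E ∧ ∀ B : Set α, BrokenCircuit M B → ¬B ⊆ S

lemma exists_circuit_subset' {α : Type*} [Fintype α] (M : Matroid α) {D : Set α}
    (hD : M.Dep D) : ∃ C ⊆ D, MatroidCircuit M C := by
  classical
  have hfin : D.Finite := Set.toFinite D
  set T : Finset (Finset α) := hfin.toFinset.powerset.filter (fun C => M.Dep ↑C) with hT
  have hTne : T.Nonempty := ⟨hfin.toFinset, by rw [hT, Finset.mem_filter, Finset.mem_powerset]; exact ⟨subset_rfl, by rwa [hfin.coe_toFinset]⟩⟩
  obtain ⟨C, hCT, hmin⟩ := T.exists_min_image Finset.card hTne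
  rw [hT, Finset.mem_filter, Finset.mem_powerset] at hCT
  obtain ⟨hCsub, hCdep⟩ := hCT
  refine ⟨↑C, by simpa [hfin.coe_toFinset] using (Finset.coe_subset.mpr hCsub), hCdep, ?_⟩
  intro x hx
  have hxC : x ∈ C := by exact_mod_cast hx
  have hsub : (↑C : Set α) \ {x} ⊆ M.E := diff_subset.trans hCdep.subset_ground
  rw [← Matroid.not_dep_iff hsub]
  intro hdep
  have herase : ((C.erase x : Finset α) : Set α) = (↑C : Set α) \ {x} := by
    simp [Finset.coe_erase]
  have hmem : C.erase x ∈ T := by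
    rw [hT, Finset.mem_filter, Finset.mem_powerset]
    exact ⟨(Finset.erase_subset x C).trans hCsub, by rwa [herase]⟩
  have := hmin _ hmem
  have hlt : (C.erase x).card < C.card := Finset.card_erase_lt_of_mem hxC
  omega

lemma circuit_mem_closure_diff' {α : Type*} (M : Matroid α) {C : Set α} {x : α}
    (hC : MatroidCircuit M C) (hx : x ∈ C) : x ∈ M.closure (C \ {x}) := by
  have hind := hC.2 x hx
  have hins : insert x (C \ {x}) = C := by
    rw [Set.insert_diff_singleton, Set.insert_eq_self.mpr hx]
  have hdep : M.Dep (insert x (C \ {x})) := by rw [hins]; exact hC.1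
  exact (hind.insert_dep_iff.mp hdep).1

lemma IsNBC.indep' {α : Type*} [Fintype α] [LinearOrder α] {M : Matroid α} {S : Set α}
    (h : IsNBC M S) : M.Indep S := by
  rw [← Matroid.not_dep_iff h.1]
  intro hdep
  obtain ⟨C, hCD, hC⟩ := exists_circuit_subset' M hdep
  have hCfin : C.Finite := Set.toFinite C
  have hCne : C.Nonempty := hC.1.nonempty
  have hne' : hCfin.toFinset.Nonempty := by simpa [Set.Finite.toFinset_nonempty] using hCne
  set m := hCfin.toFinset.min' hne' with hm
  have hmC : m ∈ C := by
    have := hCfin.toFinset.min'_mem hne'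
    rwa [Set.Finite.mem_toFinset] at this
  have hmin : ∀ x ∈ C, m ≤ x := fun x hx =>
    hCfin.toFinset.min'_le x (by rwa [Set.Finite.mem_toFinset])
  exact h.2 (C \ {m}) ⟨C, m, hC, hmC, hmin, rfl⟩ (diff_subset.trans hCD)

/-- Let `S = {i₁ > … > i_p}` be an NBC-set of a loopless matroid `M` and let
`F_k = cl{i₁, …, i_k}`. Then every other NBC-set `S'` of size `p` misses
`F_k ∖ F_{k−1}` for some `1 ≤ k ≤ p`. -/
theorem nbc_misses_some_step
    {α : Type*} [Fintype α] [LinearOrder α] (M : Matroid α)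
    (hloopless : M.closure ∅ = ∅)
    (p : ℕ) (i : Fin p → α) (hi : StrictAnti i)
    (hS : IsNBC M (Set.range i))
    (F : ℕ → Set α) (hF : ∀ k : ℕ, F k = M.closure (i '' {j : Fin p | (j : ℕ) < k}))
    (S' : Finset α) (hS' : IsNBC M ↑S') (hcard : S'.card = p)
    (hne : (↑S' : Set α) ≠ Set.range i) :
    ∃ k : ℕ, 1 ≤ k ∧ k ≤ p ∧ (↑S' : Set α) ∩ (F k \ F (k - 1)) = ∅ := by
  classical
  by_contra hcon
  push_neg at hcon
  have hiE : Set.range i ⊆ M.E := hS.1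
  have hSind : M.Indep (Set.range i) := hS.indep'
  have hex : ∀ m : Fin p, ∃ x, x ∈ (↑S' : Set α) ∩ (F ((m : ℕ)+1) \ F (m : ℕ)) := by
    intro m
    have h1 := hcon ((m : ℕ)+1) (by omega) (by omega)
    have h2 : ((m : ℕ)+1) - 1 = (m : ℕ) := by omega
    rw [h2] at h1
    exact h1
  choose g hg using hex
  have hgS' : ∀ m, g m ∈ (↑S' : Set α) := fun m => (hg m).1
  have hgF : ∀ m : Fin p, g m ∈ F ((m : ℕ)+1) := fun m => (hg m).2.1
  have hgnF : ∀ m : Fin p, g m ∉ F (m : ℕ) := fun m => (hg m).2.2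
  -- key induction : g = i
  have key : ∀ n : ℕ, ∀ hn : n < p, g ⟨n, hn⟩ = i ⟨n, hn⟩ := by
    intro n
    induction n using Nat.strong_induction_on with
    | _ n IH =>
      intro hn
      set m : Fin p := ⟨n, hn⟩ with hmdef
      by_contra hneq
      set A : Set α := i '' {j : Fin p | (j : ℕ) < n+1} with hA
      set A' : Set α := i '' {j : Fin p | (j : ℕ) < n} with hA'
      have hArange : A ⊆ Set.range i := Set.image_subset_range _ _
      have hA'range : A' ⊆ Set.range i := Set.image_subset_range _ _
      have hAind : M.Indep A := hSind.subset hArange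
      have hgmA : g m ∉ A := by
        rintro ⟨l, hl, hleq⟩
        simp only [Set.mem_setOf_eq] at hl
        rcases Nat.lt_succ_iff_lt_or_eq.mp hl with hl' | hl'
        · -- i l ∈ F n, contradiction with g m ∉ F n
          apply hgnF m
          rw [← hleq, hF]
          exact M.subset_closure _ ((Set.image_subset_range _ _).trans hiE)
            ⟨l, by exact hl', rfl⟩
        · apply hneq
          rw [← hleq]
          congr 1
          exact Fin.ext hl'
      have hgmcl : g m ∈ M.closure A := by
        have := hgF m
        rwa [hF] at this
      have hdep : M.Dep (insert (g m) A) := hAind.insert_dep_iff.mpr ⟨hgmcl, hgmA⟩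
      obtain ⟨C, hCsub, hC⟩ := exists_circuit_subset' M hdep
      have hgmC : g m ∈ C := by
        by_contra hgm
        have : C ⊆ A := fun x hx => by
          rcases hCsub hx with h | h
          · exact absurd (h ▸ hx) hgm
          · exact h
        exact hC.1.not_indep (hAind.subset this)
      have himC : i m ∈ C := by
        by_contra him
        have hsub : C \ {g m} ⊆ A' := by
          rintro x ⟨hxC, hxg⟩
          rcases hCsub hxC with h | h
          · exact absurd h hxg
          · obtain ⟨l, hl, hleq⟩ := h
            simp only [Set.mem_setOf_eq] at hl
            refine ⟨l, ?_, hleq⟩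
            simp only [Set.mem_setOf_eq]
            rcases Nat.lt_succ_iff_lt_or_eq.mp hl with hl' | hl'
            · exact hl'
            · exfalso
              apply him
              have hlm : l = m := Fin.ext hl'
              rw [← hlm, hleq]
              exact hxC
        apply hgnF m
        rw [hF]
        exact M.closure_subset_closure hsub (circuit_mem_closure_diff' M hC hgmC)
      -- elements of C are g m or i l with l ≤ n
      have hCelem : ∀ x ∈ C, x = g m ∨ ∃ l : Fin p, (l : ℕ) ≤ n ∧ x = i l := by
        intro x hx
        rcases hCsub hx with h | h
        · exact Or.inl h
        · obtain ⟨l, hl, hleq⟩ := h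
          exact Or.inr ⟨l, Nat.lt_succ_iff.mp hl, hleq.symm⟩
      have hile : ∀ l : Fin p, (l : ℕ) ≤ n → i m ≤ i l := by
        intro l hl
        exact hi.antitone (by exact Fin.mk_le_of_le_val hl)
      rcases lt_trichotomy (g m) (i m) with hlt | heq | hgt
      · -- broken circuit inside range i
        refine hS.2 (C \ {g m}) ⟨C, g m, hC, hgmC, ?_, rfl⟩ ?_
        · intro x hx
          rcases hCelem x hx with h | ⟨l, hl, hleq⟩
          · exact le_of_eq h.symm
          · exact le_of_lt (lt_of_lt_of_le hlt (hleq ▸ hile l hl))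
        · rintro x ⟨hxC, hxg⟩
          rcases hCelem x hxC with h | ⟨l, _, hleq⟩
          · exact absurd h hxg
          · exact hleq ▸ Set.mem_range_self l
      · exact hneq heq
      · -- broken circuit inside S'
        refine hS'.2 (C \ {i m}) ⟨C, i m, hC, himC, ?_, rfl⟩ ?_
        · intro x hx
          rcases hCelem x hx with h | ⟨l, hl, hleq⟩
          · exact h ▸ le_of_lt hgt
          · exact hleq ▸ hile l hl
        · rintro x ⟨hxC, hxi⟩
          rcases hCelem x hxC with h | ⟨l, hl, hleq⟩
          · exact h ▸ hgS' m
          · rcases Nat.lt_or_ge (l : ℕ) n with hl' | hl'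
            · have : g ⟨(l : ℕ), l.isLt⟩ = i ⟨(l : ℕ), l.isLt⟩ := IH _ hl' l.isLt
              have h2 : x = g ⟨(l : ℕ), l.isLt⟩ := by
                rw [this, ← hleq]
              exact h2 ▸ hgS' _
            · exfalso
              apply hxi
              have : l = m := Fin.ext (le_antisymm hl hl')
              rw [hleq, this]; rfl
  -- conclude S' = range i
  apply hne
  have hgi : g = i := by
    funext m
    have := key (m : ℕ) m.isLt
    simpa using this
  set T : Finset α := Finset.image i Finset.univ with hT
  have hTsub : T ⊆ S' := by
    intro x hx
    rw [hT, Finset.mem_image] at hx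
    obtain ⟨l, _, hleq⟩ := hx
    have := hgS' l
    rw [hgi] at this
    exact_mod_cast hleq ▸ this
  have hTcard : T.card = p := by
    rw [hT, Finset.card_image_of_injective _ hi.injective, Finset.card_univ, Fintype.card_fin]
  have : T = S' := Finset.eq_of_subset_of_card_le hTsub (by omega)
  rw [← this, hT]
  simp
end

section
/- Let M be a loopless matroid of rank d on a finite ground set E and let ℱ : ∅ = F₀ ⊊ F₁ ⊊ … ⊊ F_l = E be a flag of flats of M. Let G₀ ⊆ G₁ ⊆ … ⊆ G_d ⊆ E be a complete flag of flats of the initial matroid M_ℱ; concretely, suppose that for every j ∈ {0, …, d} and every i ∈ {1, …, l} the set F_{i−1} ∪ (G_j ∩ F_i) is a flat of M, and that Σ_{i=1}^{l} ( r(F_{i−1} ∪ (G_j ∩ F_i)) − r(F_{i−1}) ) = j for every j. Then there exist flats G'₀ ⊊ G'₁ ⊊ … ⊊ G'_d of M with r(G'_j) = j for every j, and a permutation σ of {1, …, d}, such that G'_j ∖ G'_{j−1} = G_{σ(j)} ∖ G_{σ(j)−1} for every 1 ≤ j ≤ d. -/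
open Finset Set

noncomputable def mrank {α : Type*} (M : Matroid α) (X : Set α) : ℕ :=
  sSup {n : ℕ | ∃ I : Set α, M.Indep I ∧ I ⊆ X ∧ I.ncard = n}

section Aux

variable {α : Type*} [Fintype α] {M : Matroid α} {X Y : Set α}

lemma mrank_bddAbove (M : Matroid α) (X : Set α) :
    BddAbove {n : ℕ | ∃ I : Set α, M.Indep I ∧ I ⊆ X ∧ I.ncard = n} := by
  refine ⟨Fintype.card α, fun n hn => ?_⟩
  obtain ⟨I, -, -, rfl⟩ := hn
  have := Set.ncard_le_ncard (Set.subset_univ I) Set.finite_univ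
  simpa [Set.ncard_univ, Nat.card_eq_fintype_card] using this

lemma mrank_exists (M : Matroid α) (X : Set α) :
    ∃ I : Set α, M.Indep I ∧ I ⊆ X ∧ I.ncard = mrank M X :=
 by
  have hne : {n : ℕ | ∃ I : Set α, M.Indep I ∧ I ⊆ X ∧ I.ncard = n}.Nonempty :=
    ⟨0, ∅, M.empty_indep, Set.empty_subset _, Set.ncard_empty _⟩
  exact Nat.sSup_mem hne (mrank_bddAbove M X)

lemma mrank_le_of_indep {I : Set α} (hI : M.Indep I) (hIX : I ⊆ X) :
    I.ncard ≤ mrank M X :=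
  le_csSup (mrank_bddAbove M X) ⟨I, hI, hIX, rfl⟩

lemma mrank_mono (M : Matroid α) (h : X ⊆ Y) : mrank M X ≤ mrank M Y := by
  obtain ⟨I, hI, hIX, hcard⟩ := mrank_exists M X
  rw [← hcard]
  exact mrank_le_of_indep hI (hIX.trans h)

lemma mrank_empty (M : Matroid α) : mrank M (∅ : Set α) = 0 := by
  obtain ⟨I, -, hIX, hcard⟩ := mrank_exists M (∅ : Set α)
  rw [← hcard, Set.subset_empty_iff.1 hIX, Set.ncard_empty]

lemma flat_eq_of_subset_of_mrank_le (hX : M.IsFlat X) (hY : M.IsFlat Y) (hXY : X ⊆ Y)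
    (hr : mrank M Y ≤ mrank M X) : X = Y := by
  refine hXY.antisymm fun y hy => by_contra fun hyX => ?_
  obtain ⟨I, hI, hIX, hcard⟩ := mrank_exists M X
  have hIcl : M.closure I ⊆ X := by
    rw [← hX.closure]
    exact M.closure_subset_closure hIX
  have hyI : y ∉ I := fun h => hyX (hIX h)
  have hins : M.Indep (insert y I) := by
    rw [hI.insert_indep_iff_of_notMem hyI]
    exact ⟨hY.subset_ground hy, fun h => hyX (hIcl h)⟩
  have hle := mrank_le_of_indep hins (Set.insert_subset hy (hIX.trans hXY))
  rw [Set.ncard_insert_of_notMem hyI (Set.toFinite I), hcard] at hle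
  omega

lemma flat_empty_of_loopless (hM : M.closure ∅ = ∅) : M.IsFlat (∅ : Set α) := by
  refine ⟨fun I X hI hIX => ?_, Set.empty_subset _⟩
  have hIe : I = ∅ := Set.subset_empty_iff.1 hI.subset
  have h2 := hIX.subset_closure
  rw [hIe, hM] at h2
  exact h2

lemma sum_eq_of_le_of_sum_le {s : Finset ℕ} {f g : ℕ → ℕ}
    (hle : ∀ i ∈ s, f i ≤ g i) (h : ∑ i ∈ s, g i ≤ ∑ i ∈ s, f i) :
    ∀ i ∈ s, g i = f i := by
  by_contra hc
  push_neg at hc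
  obtain ⟨i, hi, hne⟩ := hc
  exact absurd (Finset.sum_lt_sum hle ⟨i, hi, lt_of_le_of_ne (hle i hi) (Ne.symm hne)⟩)
    (not_lt.2 h)

lemma sum_step_lemma {s : Finset ℕ} {f g : ℕ → ℕ}
    (hle : ∀ i ∈ s, f i ≤ g i) (hsum : ∑ i ∈ s, g i = ∑ i ∈ s, f i + 1) :
    ∃ i₀ ∈ s, g i₀ = f i₀ + 1 ∧ ∀ i ∈ s, i ≠ i₀ → g i = f i := by
  have hex : ∃ i₀ ∈ s, f i₀ < g i₀ := by
    by_contra hc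
    push_neg at hc
    have := Finset.sum_le_sum hc
    omega
  obtain ⟨i₀, hi₀, hlt⟩ := hex
  have h1 : ∑ i ∈ s.erase i₀, f i ≤ ∑ i ∈ s.erase i₀, g i :=
    Finset.sum_le_sum fun i hi => hle i (Finset.mem_of_mem_erase hi)
  have h2 : g i₀ + ∑ i ∈ s.erase i₀, g i = ∑ i ∈ s, g i := Finset.add_sum_erase s g hi₀
  have h3 : f i₀ + ∑ i ∈ s.erase i₀, f i = ∑ i ∈ s, f i := Finset.add_sum_erase s f hi₀
  have hgi : g i₀ = f i₀ + 1 := by omega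
  have hrest : ∑ i ∈ s.erase i₀, g i ≤ ∑ i ∈ s.erase i₀, f i := by omega
  refine ⟨i₀, hi₀, hgi, fun i hi hne => ?_⟩
  exact sum_eq_of_le_of_sum_le (fun i hi => hle i (Finset.mem_of_mem_erase hi)) hrest i
    (Finset.mem_erase.2 ⟨hne, hi⟩)

lemma chain_mono {β : Type*} [Preorder β] {g : ℕ → β} {l : ℕ}
    (h : ∀ i < l, g i ≤ g (i + 1)) :
    ∀ a b, a ≤ b → b ≤ l → g a ≤ g b := by
  intro a b hab hbl
  induction b with
  | zero =>
    have : a = 0 := by omega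
    subst this; exact le_refl _
  | succ n ih =>
    rcases Nat.lt_or_ge a (n + 1) with h1 | h1
    · exact le_trans (ih (by omega) (by omega)) (h n (by omega))
    · have : a = n + 1 := by omega
      subst this; exact le_refl _

lemma telescope_sum {g : ℕ → ℕ} {l : ℕ} (hmono : ∀ i < l, g i ≤ g (i + 1)) :
    ∑ i ∈ Finset.Icc 1 l, (g i - g (i - 1)) = g l - g 0 := by
  induction l with
  | zero => simp
  | succ n ih =>
    have hmono' : ∀ i < n, g i ≤ g (i + 1) := fun i hi => hmono i (by omega)
    have h0n : g 0 ≤ g n := chain_mono hmono' 0 n (by omega) le_rfl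
    rw [← Finset.insert_Icc_right_eq_Icc_add_one (by omega), Finset.sum_insert (by simp), ih hmono']
    have := hmono n (by omega)
    simp only [Nat.add_sub_cancel]
    omega

end Aux

/-- Any complete flag of flats `G₀ ⊆ … ⊆ G_d` of the initial matroid `M_ℱ` of a flag
of flats `ℱ : ∅ = F₀ ⊊ … ⊊ F_l = E` of a loopless matroid `M` of rank `d` can be
lifted: there is a complete flag of flats `G'₀ ⊊ … ⊊ G'_d` of `M` and a permutation
`σ` of `{1, …, d}` with `G'_j ∖ G'_{j−1} = G_{σ(j)} ∖ G_{σ(j)−1}` for all `j`.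
Here being a flat of `M_ℱ` is expressed by `F_{i−1} ∪ (G_j ∩ F_i)` being a flat of `M`
for every `i`, and the rank of `G_j` in `M_ℱ`, namely
`Σ_{i=1}^{l} (r(F_{i−1} ∪ (G_j ∩ F_i)) − r(F_{i−1}))`, being `j`. -/
theorem initial_matroid_flag_lift
    {α : Type*} [Fintype α] (M : Matroid α)
    (hloopless : M.closure ∅ = ∅)
    (d : ℕ) (hd : mrank M M.E = d)
    (l : ℕ) (F : ℕ → Set α)
    (hF0 : F 0 = ∅) (hFl : F l = M.E)
    (hFflat : ∀ i ≤ l, M.IsFlat (F i))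
    (hFmono : ∀ i < l, F i ⊂ F (i + 1))
    (G : ℕ → Set α)
    (hGE : ∀ j ≤ d, G j ⊆ M.E)
    (hGmono : ∀ j < d, G j ⊆ G (j + 1))
    (hGflat : ∀ j ≤ d, ∀ i : ℕ, 1 ≤ i → i ≤ l → M.IsFlat (F (i - 1) ∪ (G j ∩ F i)))
    (hGrank : ∀ j ≤ d,
      ∑ i ∈ Finset.Icc 1 l,
        (mrank M (F (i - 1) ∪ (G j ∩ F i)) - mrank M (F (i - 1))) = j) :
    ∃ (G' : ℕ → Set α) (σ : Equiv.Perm (Fin d)),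
      (∀ j ≤ d, M.IsFlat (G' j)) ∧
      (∀ j < d, G' j ⊂ G' (j + 1)) ∧
      (∀ j ≤ d, mrank M (G' j) = j) ∧
      (∀ j : Fin d,
        G' ((j : ℕ) + 1) \ G' (j : ℕ) = G ((σ j : ℕ) + 1) \ G (σ j : ℕ)) := by
  classical
  have hflat_empty : M.IsFlat (∅ : Set α) := flat_empty_of_loopless hloopless
  have hr_empty : mrank M (∅ : Set α) = 0 := mrank_empty M
  have hFsub : ∀ i i', i ≤ i' → i' ≤ l → F i ⊆ F i' :=
    fun i i' h1 h2 => chain_mono (fun m hm => (hFmono m hm).subset) i i' h1 h2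
  set H : ℕ → ℕ → Set α := fun i j => F (i - 1) ∪ (G j ∩ F i) with hHdef
  set ρ : ℕ → ℕ → ℕ := fun i j => mrank M (H i j) - mrank M (F (i - 1)) with hρdef
  have hHflat : ∀ j ≤ d, ∀ i, 1 ≤ i → i ≤ l → M.IsFlat (H i j) :=
    fun j hj i h1 h2 => hGflat j hj i h1 h2
  have hHsub1 : ∀ i j, F (i - 1) ⊆ H i j := fun i j => Set.subset_union_left
  have hHsub2 : ∀ i, 1 ≤ i → i ≤ l → ∀ j, H i j ⊆ F i := fun i h1 h2 j =>
    Set.union_subset (hFsub (i - 1) i (by omega) h2) Set.inter_subset_right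
  have hHmono : ∀ i j j', j ≤ j' → j' ≤ d → H i j ⊆ H i j' := by
    intro i j j' h1 h2
    refine chain_mono (fun m hm => ?_) j j' h1 h2
    exact Set.union_subset_union_right _ (Set.inter_subset_inter_left _ (hGmono m hm))
  have hrH : ∀ i j, mrank M (H i j) = mrank M (F (i - 1)) + ρ i j := by
    intro i j
    have := mrank_mono M (hHsub1 i j)
    simp only [hρdef]
    omega
  have hρsum : ∀ j ≤ d, ∑ i ∈ Finset.Icc 1 l, ρ i j = j := by
    intro j hj
    simp only [hρdef, hHdef]
    exact hGrank j hj
  have hHrigid : ∀ i, 1 ≤ i → i ≤ l → ∀ j j', j ≤ j' → j' ≤ d → ρ i j = ρ i j' →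
      H i j = H i j' := by
    intro i h1 h2 j j' hjj' hj'd hρeq
    refine flat_eq_of_subset_of_mrank_le (hHflat j (le_trans hjj' hj'd) i h1 h2)
      (hHflat j' hj'd i h1 h2) (hHmono i j j' hjj' hj'd) ?_
    rw [hrH i j, hrH i j', hρeq]
  have hρ0 : ∀ i ∈ Finset.Icc 1 l, ρ i 0 = 0 := by
    intro i hi
    exact (Finset.sum_eq_zero_iff).1 (hρsum 0 (Nat.zero_le d)) i hi
  have hH0 : ∀ i ∈ Finset.Icc 1 l, H i 0 = F (i - 1) := by
    intro i hi
    obtain ⟨h1, h2⟩ := Finset.mem_Icc.1 hi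
    refine (flat_eq_of_subset_of_mrank_le (hFflat (i - 1) (by omega))
      (hHflat 0 (Nat.zero_le d) i h1 h2) (hHsub1 i 0) ?_).symm
    rw [hrH i 0, hρ0 i hi]
    omega
  have hgap : ∑ i ∈ Finset.Icc 1 l, (mrank M (F i) - mrank M (F (i - 1))) = d := by
    rw [telescope_sum (g := fun i => mrank M (F i))
      (fun i hi => mrank_mono M (hFmono i hi).subset), hFl, hF0, hr_empty, hd]
    omega
  have hρd : ∀ i ∈ Finset.Icc 1 l, ρ i d = mrank M (F i) - mrank M (F (i - 1)) := by
    have hle : ∀ i ∈ Finset.Icc 1 l, ρ i d ≤ mrank M (F i) - mrank M (F (i - 1)) := by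
      intro i hi
      obtain ⟨h1, h2⟩ := Finset.mem_Icc.1 hi
      have h3 := mrank_mono M (hHsub2 i h1 h2 d)
      have h4 := hrH i d
      omega
    have hsum : ∑ i ∈ Finset.Icc 1 l, (mrank M (F i) - mrank M (F (i - 1)))
        ≤ ∑ i ∈ Finset.Icc 1 l, ρ i d := by
      rw [hgap, hρsum d le_rfl]
    intro i hi
    exact (sum_eq_of_le_of_sum_le hle hsum i hi).symm
  have hHd : ∀ i ∈ Finset.Icc 1 l, H i d = F i := by
    intro i hi
    obtain ⟨h1, h2⟩ := Finset.mem_Icc.1 hi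
    refine flat_eq_of_subset_of_mrank_le (hHflat d le_rfl i h1 h2) (hFflat i h2)
      (hHsub2 i h1 h2 d) ?_
    rw [hrH i d, hρd i hi]
    have := mrank_mono M (hFsub (i - 1) i (by omega) h2)
    omega
  have hstep : ∀ j < d, ∃ i₀ ∈ Finset.Icc 1 l,
      ρ i₀ (j + 1) = ρ i₀ j + 1 ∧ ∀ i ∈ Finset.Icc 1 l, i ≠ i₀ → ρ i (j + 1) = ρ i j := by
    intro j hj
    apply sum_step_lemma
    · intro i hi
      have h2 := mrank_mono M (hHmono i j (j + 1) (by omega) (by omega))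
      have h3 := hrH i j
      have h4 := hrH i (j + 1)
      omega
    · rw [hρsum (j + 1) (by omega), hρsum j (by omega)]
  set b : ℕ → ℕ := fun j => if h : j < d then (hstep j h).choose else 0 with hbdef
  have hb : ∀ j, (h : j < d) → b j ∈ Finset.Icc 1 l ∧ ρ (b j) (j + 1) = ρ (b j) j + 1 ∧
      ∀ i ∈ Finset.Icc 1 l, i ≠ b j → ρ i (j + 1) = ρ i j := by
    intro j h
    have hbj : b j = (hstep j h).choose := by rw [hbdef]; exact dif_pos h
    obtain ⟨h1, h2, h3⟩ := (hstep j h).choose_spec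
    rw [hbj]
    exact ⟨h1, h2, h3⟩
  set bf : Fin d → ℕ := fun m => b (m : ℕ) with hbfdef
  set σ : Equiv.Perm (Fin d) := Tuple.sort bf with hσdef
  have hσ := (Tuple.eq_sort_iff (f := bf) (σ := σ)).1 hσdef
  have hσmono : Monotone (bf ∘ σ) := hσ.1
  have hσstab : ∀ m m' : Fin d, m < m' → bf (σ m) = bf (σ m') → σ m < σ m' := hσ.2
  set s : ℕ → ℕ := fun m => if h : m < d then (σ ⟨m, h⟩ : ℕ) else 0 with hsdef
  have hs_def : ∀ m, (h : m < d) → s m = (σ ⟨m, h⟩ : ℕ) := by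
    intro m h; rw [hsdef]; exact dif_pos h
  have hs_lt : ∀ m, m < d → s m < d := by
    intro m hm; rw [hs_def m hm]; exact (σ ⟨m, hm⟩).2
  have hbs : ∀ m, (h : m < d) → b (s m) = bf (σ ⟨m, h⟩) := by
    intro m h; rw [hs_def m h]
  have hs_inj : ∀ m m', m < d → m' < d → s m = s m' → m = m' := by
    intro m m' hm hm' heq
    rw [hs_def m hm, hs_def m' hm'] at heq
    have h2 : σ ⟨m, hm⟩ = σ ⟨m', hm'⟩ := Fin.val_injective heq
    have h3 := σ.injective h2
    exact congrArg Fin.val h3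
  have hs_surj : ∀ j, j < d → ∃ m, m < d ∧ s m = j := by
    intro j hj
    refine ⟨(σ.symm ⟨j, hj⟩ : ℕ), (σ.symm ⟨j, hj⟩).2, ?_⟩
    rw [hs_def _ (σ.symm ⟨j, hj⟩).2]
    simp only [Fin.eta, Equiv.apply_symm_apply]
  have hband_mono : ∀ m m', m ≤ m' → m' < d → b (s m) ≤ b (s m') := by
    intro m m' h1 h2
    have hm : m < d := lt_of_le_of_lt h1 h2
    rw [hbs m hm, hbs m' h2]
    exact hσmono (show (⟨m, hm⟩ : Fin d) ≤ ⟨m', h2⟩ from h1)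
  have hstab' : ∀ m m', m < m' → m' < d → b (s m) = b (s m') → s m < s m' := by
    intro m m' h1 h2 heq
    have hm : m < d := lt_of_lt_of_le h1 (Nat.le_of_lt_succ (Nat.lt_succ_of_lt h2))
    rw [hbs m hm, hbs m' h2] at heq
    have := hσstab ⟨m, hm⟩ ⟨m', h2⟩ h1 heq
    rw [hs_def m hm, hs_def m' h2]
    exact this
  have hearly : ∀ m, m < d → ∀ j, j < d → b j = b (s m) → j < s m →
      ∃ m', m' < m ∧ m' < d ∧ s m' = j := by
    intro m hm j hj heq hlt
    obtain ⟨m'', hm''d, hsm''⟩ := hs_surj j hj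
    refine ⟨m'', ?_, hm''d, hsm''⟩
    by_contra hcon
    push_neg at hcon
    rcases Nat.lt_or_ge m m'' with hc | hc
    · have := hstab' m m'' hc hm''d (by rw [hsm'']; exact heq.symm)
      omega
    · have : m = m'' := by omega
      subst this
      omega
  have hlate : ∀ m, m < d → ∀ j, j < d → b j = b (s m) → s m < j →
      ∃ m', m < m' ∧ m' < d ∧ s m' = j := by
    intro m hm j hj heq hlt
    obtain ⟨m'', hm''d, hsm''⟩ := hs_surj j hj
    refine ⟨m'', ?_, hm''d, hsm''⟩
    by_contra hcon
    push_neg at hcon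
    rcases Nat.lt_or_ge m'' m with hc | hc
    · have := hstab' m'' m hc hm (by rw [hsm'']; exact heq)
      omega
    · have : m = m'' := by omega
      subst this
      omega
  have hother : ∀ m, m < d → ∀ j, j < d → b j < b (s m) →
      ∃ m', m' < m ∧ m' < d ∧ s m' = j := by
    intro m hm j hj hlt
    obtain ⟨m'', hm''d, hsm''⟩ := hs_surj j hj
    refine ⟨m'', ?_, hm''d, hsm''⟩
    by_contra hcon
    push_neg at hcon
    have := hband_mono m m'' hcon hm''d
    rw [hsm''] at this
    omega
  have hother2 : ∀ m, m < d → ∀ j, j < d → b (s m) < b j →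
      ∃ m', m < m' ∧ m' < d ∧ s m' = j := by
    intro m hm j hj hlt
    obtain ⟨m'', hm''d, hsm''⟩ := hs_surj j hj
    refine ⟨m'', ?_, hm''d, hsm''⟩
    by_contra hcon
    push_neg at hcon
    have := hband_mono m'' m hcon hm
    rw [hsm''] at this
    omega
  have hconst : ∀ i ∈ Finset.Icc 1 l, ∀ j j', j ≤ j' → j' ≤ d →
      (∀ m, j ≤ m → m < j' → b m ≠ i) → ρ i j' = ρ i j := by
    intro i hi j j' h1 h2 h3
    induction j' with
    | zero =>
      have : j = 0 := by omega
      subst this; rfl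
    | succ n ih =>
      rcases Nat.lt_or_ge j (n + 1) with hc | hc
      · have hbn : i ≠ b n := fun h => (h3 n (by omega) (by omega)) h.symm
        have h4 : ρ i (n + 1) = ρ i n := (hb n (by omega)).2.2 i hi hbn
        rw [h4]
        exact ih (by omega) (by omega) (fun m hm1 hm2 => h3 m hm1 (by omega))
      · have : j = n + 1 := by omega
        subst this; rfl
  have hFconst : ∀ i1 i2, i1 ≤ i2 → i2 ≤ l →
      (∀ i', i1 < i' → i' ≤ i2 → ∀ j, j < d → b j ≠ i') →
      mrank M (F i2) = mrank M (F i1) := by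
    intro i1 i2 h12 h2l hno
    induction i2 with
    | zero =>
      have : i1 = 0 := by omega
      subst this; rfl
    | succ n ih =>
      rcases Nat.lt_or_ge i1 (n + 1) with hc | hc
      · have hmem : (n + 1) ∈ Finset.Icc 1 l := Finset.mem_Icc.2 ⟨by omega, h2l⟩
        have hzero : ρ (n + 1) d = ρ (n + 1) 0 :=
          hconst (n + 1) hmem 0 d (by omega) le_rfl
            (fun m _ hm2 => hno (n + 1) (by omega) (by omega) m hm2)
        have h0 : ρ (n + 1) 0 = 0 := hρ0 _ hmem
        have hgapd := hρd (n + 1) hmem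
        have hmle : mrank M (F n) ≤ mrank M (F (n + 1)) :=
          mrank_mono M (hFmono n (by omega)).subset
        simp only [Nat.add_sub_cancel] at hgapd
        have heq : mrank M (F (n + 1)) = mrank M (F n) := by omega
        rw [heq]
        exact ih (by omega) (by omega) (fun i' h1' h2' => hno i' h1' (by omega))
      · have : i1 = n + 1 := by omega
        subst this; rfl
  set G' : ℕ → Set α := fun k => if k = 0 then (∅ : Set α)
    else if k ≤ d then H (b (s (k - 1))) (s (k - 1) + 1) else M.E with hG'def
  have hG'0 : G' 0 = ∅ := by simp [hG'def]
  have hG'succ : ∀ k, k < d → G' (k + 1) = H (b (s k)) (s k + 1) := by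
    intro k hk
    rw [hG'def]
    simp only [Nat.add_eq_zero, Nat.add_sub_cancel]
    rw [if_neg (by omega), if_pos (by omega)]
  -- the key fact
  have hkey : ∀ m, m < d → G' m = H (b (s m)) (s m) := by
    intro m hm
    match m with
    | 0 =>
      have hs0 : s 0 < d := hs_lt 0 hm
      set i : ℕ := b (s 0) with hidef
      have him : i ∈ Finset.Icc 1 l := (hb (s 0) hs0).1
      obtain ⟨hi1, hi2⟩ := Finset.mem_Icc.1 him
      have hρs0 : ρ i (s 0) = ρ i 0 := by
        refine hconst i him 0 (s 0) (by omega) (le_of_lt hs0) ?_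
        intro m' _ hm'
        intro heq
        obtain ⟨m'', hm''0, _, _⟩ := hearly 0 hm m' (lt_trans hm' hs0) heq hm'
        omega
      have hHs0 : H i (s 0) = F (i - 1) := by
        rw [← hHrigid i hi1 hi2 0 (s 0) (by omega) (le_of_lt hs0) hρs0.symm]
        exact hH0 i him
      have hrF : mrank M (F (i - 1)) = 0 := by
        have := hFconst 0 (i - 1) (by omega) (by omega) ?_
        · rw [this, hF0, hr_empty]
        · intro i' h1' h2' j hj heq
          obtain ⟨m'', hm''0, _, _⟩ := hother 0 hm j hj (by omega)
          omega
      have hFe : F (i - 1) = ∅ := by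
        refine (flat_eq_of_subset_of_mrank_le hflat_empty (hFflat (i - 1) (by omega))
          (Set.empty_subset _) (by rw [hrF, hr_empty])).symm
      rw [hG'0, hHs0, hFe]
    | Nat.succ k =>
      have hkd : k < d := by omega
      have hpd : s k < d := hs_lt k hkd
      have hqd : s (k + 1) < d := hs_lt (k + 1) hm
      have him : b (s k) ∈ Finset.Icc 1 l := (hb (s k) hpd).1
      have him' : b (s (k + 1)) ∈ Finset.Icc 1 l := (hb (s (k + 1)) hqd).1
      obtain ⟨hi1, hi2⟩ := Finset.mem_Icc.1 him
      obtain ⟨hi'1, hi'2⟩ := Finset.mem_Icc.1 him'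
      have hii' : b (s k) ≤ b (s (k + 1)) := hband_mono k (k + 1) (by omega) hm
      rw [hG'succ k hkd]
      rcases eq_or_lt_of_le hii' with heq | hlt
      · -- same band
        have hpq : s k < s (k + 1) := hstab' k (k + 1) (by omega) hm heq
        have hρeq : ρ (b (s k)) (s (k + 1)) = ρ (b (s k)) (s k + 1) := by
          refine hconst (b (s k)) him (s k + 1) (s (k + 1)) (by omega) (le_of_lt hqd) ?_
          intro m' hm'1 hm'2 heq'
          have hm'd : m' < d := by omega
          obtain ⟨m1, hm1, _, hsm1⟩ := hlate k hkd m' hm'd (by rw [heq']) (by omega)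
          obtain ⟨m2, hm2, _, hsm2⟩ := hearly (k + 1) hm m' hm'd
            (by rw [heq', ← heq]) (by omega)
          have : m1 = m2 := hs_inj m1 m2 (by omega) (by omega) (by rw [hsm1, hsm2])
          omega
        rw [← heq]
        exact hHrigid (b (s k)) hi1 hi2 (s k + 1) (s (k + 1)) (by omega)
          (le_of_lt hqd) hρeq.symm
      · -- band increases
        have hH1 : H (b (s k)) (s k + 1) = F (b (s k)) := by
          have hρe : ρ (b (s k)) d = ρ (b (s k)) (s k + 1) := by
            refine hconst (b (s k)) him (s k + 1) d (by omega) le_rfl ?_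
            intro m' hm'1 hm'2 heq'
            obtain ⟨m1, hm1, hm1d, hsm1⟩ := hlate k hkd m' hm'2 (by rw [heq']) (by omega)
            have : b (s (k + 1)) ≤ b (s m1) := hband_mono (k + 1) m1 (by omega) hm1d
            rw [hsm1, heq'] at this
            omega
          rw [hHrigid (b (s k)) hi1 hi2 (s k + 1) d (by omega) le_rfl hρe.symm]
          exact hHd _ him
        have hH2 : H (b (s (k + 1))) (s (k + 1)) = F (b (s (k + 1)) - 1) := by
          have hρe : ρ (b (s (k + 1))) (s (k + 1)) = ρ (b (s (k + 1))) 0 := by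
            refine hconst (b (s (k + 1))) him' 0 (s (k + 1)) (by omega) (le_of_lt hqd) ?_
            intro m' _ hm'2 heq'
            have hm'd : m' < d := by omega
            obtain ⟨m1, hm1, hm1d, hsm1⟩ := hearly (k + 1) hm m' hm'd (by rw [heq']) (by omega)
            have hm1k : m1 ≤ k := by omega
            have : b (s m1) ≤ b (s k) := hband_mono m1 k hm1k hkd
            rw [hsm1, heq'] at this
            omega
          rw [← hHrigid (b (s (k + 1))) hi'1 hi'2 0 (s (k + 1)) (by omega) (le_of_lt hqd)
            hρe.symm]
          exact hH0 _ him'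
        have hFeq : F (b (s k)) = F (b (s (k + 1)) - 1) := by
          have hrq : mrank M (F (b (s (k + 1)) - 1)) = mrank M (F (b (s k))) := by
            refine hFconst (b (s k)) (b (s (k + 1)) - 1) (by omega) (by omega) ?_
            intro i'' h1'' h2'' j hj heq''
            obtain ⟨m1, hm1, hm1d, hsm1⟩ := hother2 k hkd j hj (by omega)
            have : b (s (k + 1)) ≤ b (s m1) := hband_mono (k + 1) m1 (by omega) hm1d
            rw [hsm1, heq''] at this
            omega
          exact flat_eq_of_subset_of_mrank_le (hFflat _ hi2) (hFflat _ (by omega))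
            (hFsub _ _ (by omega) (by omega)) (le_of_eq hrq)
        rw [hH1, hFeq, ← hH2]
  have hG'rank : ∀ k, k ≤ d → mrank M (G' k) = k := by
    intro k hk
    induction k with
    | zero => rw [hG'0, hr_empty]
    | succ n ih =>
      have hnd : n < d := by omega
      have hstep' : mrank M (G' (n + 1)) = mrank M (G' n) + 1 := by
        rw [hG'succ n hnd, hkey n hnd, hrH, hrH, (hb (s n) (hs_lt n hnd)).2.1]
        omega
      rw [hstep', ih (by omega)]
  have hG'flat : ∀ k, k ≤ d → M.IsFlat (G' k) := by
    intro k hk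
    match k with
    | 0 => rw [hG'0]; exact hflat_empty
    | Nat.succ n =>
      have hnd : n < d := by omega
      obtain ⟨h1, h2⟩ := Finset.mem_Icc.1 (hb (s n) (hs_lt n hnd)).1
      rw [hG'succ n hnd]
      exact hHflat (s n + 1) (by have := hs_lt n hnd; omega) _ h1 h2
  have hG'chain : ∀ k, k < d → G' k ⊂ G' (k + 1) := by
    intro k hk
    have hsub : G' k ⊆ G' (k + 1) := by
      rw [hG'succ k hk, hkey k hk]
      exact hHmono _ (s k) (s k + 1) (by omega) (by have := hs_lt k hk; omega)
    refine hsub.ssubset_of_ne ?_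
    intro heq
    have h1 := hG'rank k (by omega)
    have h2 := hG'rank (k + 1) (by omega)
    rw [heq, h2] at h1
    omega
  have hdiff : ∀ j, j < d → H (b j) (j + 1) \ H (b j) j = G (j + 1) \ G j := by
    intro j hj
    obtain ⟨hbmem, hbstep, hbne⟩ := hb j hj
    obtain ⟨hb1, hb2⟩ := Finset.mem_Icc.1 hbmem
    have hne : ∀ i ∈ Finset.Icc 1 l, i ≠ b j → H i (j + 1) = H i j := by
      intro i hi hnei
      exact (hHrigid i (Finset.mem_Icc.1 hi).1 (Finset.mem_Icc.1 hi).2 j (j + 1)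
        (by omega) (by omega) (hbne i hi hnei).symm).symm
    ext x
    simp only [Set.mem_diff]
    constructor
    · rintro ⟨hx1, hx2⟩
      rcases hx1 with hxF | ⟨hxG, hxFi⟩
      · exact absurd (Or.inl hxF) hx2
      refine ⟨hxG, fun hxGj => hx2 (Or.inr ⟨hxGj, hxFi⟩)⟩
    · rintro ⟨hxG, hxGj⟩
      have hxE : x ∈ F l := by rw [hFl]; exact hGE (j + 1) (by omega) hxG
      have hex : ∃ n, x ∈ F n := ⟨l, hxE⟩
      have hi'1 : x ∈ F (Nat.find hex) := Nat.find_spec hex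
      have hmin : ∀ t, t < Nat.find hex → x ∉ F t := fun t ht => Nat.find_min hex ht
      have hi'pos : 1 ≤ Nat.find hex := by
        rcases Nat.eq_zero_or_pos (Nat.find hex) with h | h
        · rw [h, hF0] at hi'1; exact absurd hi'1 (Set.notMem_empty x)
        · exact h
      have hi'l : Nat.find hex ≤ l := Nat.find_le hxE
      have heqi : Nat.find hex = b j := by
        by_contra hne'
        have h1 : x ∈ H (Nat.find hex) (j + 1) := Or.inr ⟨hxG, hi'1⟩
        rw [hne (Nat.find hex) (Finset.mem_Icc.2 ⟨hi'pos, hi'l⟩) hne'] at h1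
        rcases h1 with h1 | h1
        · exact hmin (Nat.find hex - 1) (by omega) h1
        · exact hxGj h1.1
      constructor
      · exact Or.inr ⟨hxG, heqi ▸ hi'1⟩
      · intro hc
        rcases hc with hc | hc
        · exact hmin (b j - 1) (by omega) (heqi ▸ hc)
        · exact hxGj hc.1
  refine ⟨G', σ, hG'flat, hG'chain, hG'rank, ?_⟩
  intro m
  have hmd : (m : ℕ) < d := m.2
  have hsm : s (m : ℕ) = (σ m : ℕ) := by
    rw [hs_def (m : ℕ) hmd]
  rw [hG'succ (m : ℕ) hmd, hkey (m : ℕ) hmd, hsm]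
  exact hdiff (σ m : ℕ) (σ m).2
end
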